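/- arXiv:1002.0056 — 6 statements merged into one kernel-verified Lean document; each statement's English description precedes it below -/
import Mathlib

section
/- For all integers d ≥ 1 and k ≥ 1, A_{d,k} = d! · B_{d+1}(k), where A_{d,k} is the Eulerian number and B_{d+1} is the cardinal B-spline of order d+1. -/
open MeasureTheory Real Filter Finset

/-- The cardinal B-spline of order `d`: `B_1` is the indicator of `[0,1)`,
and `B_d = B_1 * B_{d-1}` (convolution) for `d ≥ 2`. -/
noncomputable def Bspline : ℕ → ℝ → ℝ
  | 0, _ => 0
  | 1, x => if 0 ≤ x ∧ x < 1 then 1 else 0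
  | (d + 2), x => ∫ y : ℝ, (if 0 ≤ x - y ∧ x - y < 1 then (1 : ℝ) else 0) * Bspline (d + 1) y

/-- truncated power -/
noncomputable def tpow : ℕ → ℝ → ℝ
  | 0, x => if 0 ≤ x then 1 else 0
  | (m+1), x => max x 0 ^ (m+1)

lemma tpow_succ (m : ℕ) (x : ℝ) : tpow (m+1) x = max x 0 ^ (m+1) := rfl
lemma tpow_zero (x : ℝ) : tpow 0 x = if 0 ≤ x then 1 else 0 := rfl

lemma continuous_tpow_succ (m : ℕ) (c : ℝ) :
    Continuous (fun y : ℝ => tpow (m+1) (y - c)) := by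
  simp only [tpow_succ]
  exact ((continuous_id.sub continuous_const).max continuous_const).pow _

lemma monotone_tpow_zero (c : ℝ) : Monotone (fun y : ℝ => tpow 0 (y - c)) := by
  intro a b hab
  simp only [tpow_zero]
  split_ifs with h1 h2 <;> norm_num
  linarith

lemma intervalIntegrable_tpow (m : ℕ) (c a b : ℝ) :
    IntervalIntegrable (fun y : ℝ => tpow m (y - c)) volume a b := by
  cases m with
  | zero => exact (monotone_tpow_zero c).intervalIntegrable
  | succ m => exact (continuous_tpow_succ m c).intervalIntegrable a b

lemma hasDerivAt_maxpow (m : ℕ) (c y : ℝ) :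
    HasDerivAt (fun y : ℝ => max (y - c) 0 ^ (m+2) / ((m:ℝ)+2)) (max (y - c) 0 ^ (m+1)) y := by
  rcases lt_trichotomy y c with h | h | h
  · have hev : (fun y : ℝ => max (y - c) 0 ^ (m+2) / ((m:ℝ)+2)) =ᶠ[nhds y] fun _ => (0:ℝ) := by
      filter_upwards [eventually_lt_nhds h] with z hz
      rw [max_eq_right (by linarith), zero_pow (by omega), zero_div]
    have hd := (hasDerivAt_const y (0:ℝ)).congr_of_eventuallyEq hev
    rw [max_eq_right (by linarith : y - c ≤ 0), zero_pow (Nat.succ_ne_zero m)]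
    exact hd
  · subst h
    rw [hasDerivAt_iff_isLittleO]
    have hA : (fun z : ℝ => max (z - y) 0 ^ (m+1)) =o[nhds y] (fun _ => (1:ℝ)) := by
      rw [Asymptotics.isLittleO_one_iff]
      have hc : Continuous (fun z : ℝ => max (z - y) 0 ^ (m+1)) :=
        ((continuous_id.sub continuous_const).max continuous_const).pow _
      have := hc.tendsto y
      simpa using this
    have hB : (fun z : ℝ => max (z - y) 0) =O[nhds y] (fun z => z - y) := by
      apply Asymptotics.isBigO_of_le
      intro z
      rcases le_total (z - y) 0 with hz | hz
      · rw [max_eq_right hz]; simp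
      · rw [max_eq_left hz]
    have hAB := hA.mul_isBigO hB
    simp only [one_mul] at hAB
    have hAB2 : (fun z : ℝ => max (z - y) 0 ^ (m+2) / ((m:ℝ)+2)) =o[nhds y] (fun z => z - y) := by
      have := hAB.const_mul_left (1 / ((m:ℝ)+2))
      refine this.congr_left (fun z => ?_)
      ring
    refine hAB2.congr_left (fun z => ?_)
    simp [zero_pow]
  · have hev : (fun y : ℝ => max (y - c) 0 ^ (m+2) / ((m:ℝ)+2)) =ᶠ[nhds y]
        fun z => (z - c) ^ (m+2) / ((m:ℝ)+2) := by
      filter_upwards [eventually_gt_nhds h] with z hz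
      rw [max_eq_left (by linarith)]
    have key : HasDerivAt (fun z : ℝ => (z - c) ^ (m + 2)) (((m:ℝ)+2) * (y - c) ^ (m + 1)) y := by
      have := ((hasDerivAt_id y).sub_const c).pow (m+2)
      simp only [id_eq, Nat.add_sub_cancel, mul_one] at this
      refine this.congr_deriv ?_
      push_cast
      ring
    have hd := (key.div_const ((m:ℝ)+2)).congr_of_eventuallyEq hev
    rw [max_eq_left (by linarith : 0 ≤ y - c)]
    refine hd.congr_deriv ?_
    rw [mul_comm, mul_div_assoc, div_self (by positivity), mul_one]

lemma tpow_integral (m : ℕ) (c x : ℝ) :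
    ∫ y in (x-1)..x, tpow m (y - c)
      = (tpow (m+1) (x - c) - tpow (m+1) (x - 1 - c)) / ((m:ℝ)+1) := by
  cases m with
  | zero =>
    have hind : (fun y : ℝ => tpow 0 (y - c)) = Set.indicator (Set.Ici c) (fun _ => (1:ℝ)) := by
      ext y
      simp [tpow_zero, Set.indicator_apply, sub_nonneg]
    rw [intervalIntegral.integral_of_le (by linarith), hind,
      MeasureTheory.setIntegral_indicator measurableSet_Ici]
    simp only [tpow_succ, pow_one, Nat.cast_zero, zero_add, div_one,
      MeasureTheory.setIntegral_const, smul_eq_mul, mul_one]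
    rcases le_or_gt c (x-1) with h1 | h1
    · have hs : Set.Ioc (x-1) x ∩ Set.Ici c = Set.Ioc (x-1) x := by
        apply Set.inter_eq_left.mpr
        intro y hy
        exact le_trans h1 (le_of_lt hy.1)
      rw [hs, MeasureTheory.measureReal_def, Real.volume_Ioc, max_eq_left (by linarith), max_eq_left (by linarith)]
      rw [ENNReal.toReal_ofReal (by linarith)]
      ring
    · rcases le_or_gt c x with h2 | h2
      · have hs : Set.Ioc (x-1) x ∩ Set.Ici c = Set.Icc c x := by
          ext y
          simp only [Set.mem_inter_iff, Set.mem_Ioc, Set.mem_Ici, Set.mem_Icc]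
          constructor
          · rintro ⟨⟨_, hy2⟩, hy3⟩; exact ⟨hy3, hy2⟩
          · rintro ⟨hy1, hy2⟩; exact ⟨⟨by linarith, hy2⟩, hy1⟩
        rw [hs, MeasureTheory.measureReal_def, Real.volume_Icc, max_eq_left (by linarith), max_eq_right (by linarith)]
        rw [ENNReal.toReal_ofReal (by linarith)]
        ring
      · have hs : Set.Ioc (x-1) x ∩ Set.Ici c = ∅ := by
          ext y
          simp only [Set.mem_inter_iff, Set.mem_Ioc, Set.mem_Ici, Set.mem_empty_iff_false,
            iff_false, not_and]
          rintro ⟨_, hy2⟩ hy3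
          linarith
        rw [hs, max_eq_right (by linarith), max_eq_right (by linarith)]
        simp
  | succ m =>
    have h := intervalIntegral.integral_eq_sub_of_hasDerivAt (a := x - 1) (b := x)
      (f := fun y : ℝ => max (y - c) 0 ^ (m+2) / ((m:ℝ)+2))
      (f' := fun y : ℝ => max (y - c) 0 ^ (m+1))
      (fun y _ => hasDerivAt_maxpow m c y)
      ((((continuous_id.sub continuous_const).max continuous_const).pow _).intervalIntegrable _ _)
    simp only [tpow_succ]
    rw [h]
    push_cast
    ring

lemma Bspline_succ (n : ℕ) (x : ℝ) :
    Bspline (n+2) x = ∫ y in (x-1)..x, Bspline (n+1) y := by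
  have : Bspline (n+2) x
      = ∫ y : ℝ, (if 0 ≤ x - y ∧ x - y < 1 then (1:ℝ) else 0) * Bspline (n+1) y := rfl
  rw [this, intervalIntegral.integral_of_le (by linarith),
    ← MeasureTheory.integral_indicator measurableSet_Ioc]
  congr 1
  ext y
  rw [Set.indicator_apply]
  by_cases h : y ∈ Set.Ioc (x-1) x
  · rw [if_pos h, if_pos, one_mul]
    obtain ⟨h1, h2⟩ := h
    constructor <;> linarith
  · rw [if_neg h, if_neg, zero_mul]
    rw [Set.mem_Ioc] at h
    rintro ⟨h1, h2⟩
    exact h ⟨by linarith, by linarith⟩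

lemma alt_sum_shift (n : ℕ) (F : ℕ → ℝ) :
    ∑ i ∈ Finset.range (n+3), (-1:ℝ)^i * ((n+2).choose i) * F i
      = ∑ i ∈ Finset.range (n+2), (-1:ℝ)^i * ((n+1).choose i) * F i
        - ∑ i ∈ Finset.range (n+2), (-1:ℝ)^i * ((n+1).choose i) * F (i+1) := by
  have ha : ∑ i ∈ Finset.range (n+3), (-1:ℝ)^i * ((n+2).choose i) * F i
      = ∑ i ∈ Finset.range (n+2), (-1:ℝ)^(i+1) * ((n+2).choose (i+1)) * F (i+1) + F 0 := by
    rw [Finset.sum_range_succ' (fun i => (-1:ℝ)^i * ((n+2).choose i) * F i) (n+2)]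
    simp
  have hb : ∑ i ∈ Finset.range (n+2), (-1:ℝ)^(i+1) * ((n+2).choose (i+1)) * F (i+1)
      = -(∑ i ∈ Finset.range (n+2), (-1:ℝ)^i * ((n+1).choose i) * F (i+1))
        - ∑ i ∈ Finset.range (n+2), (-1:ℝ)^i * ((n+1).choose (i+1)) * F (i+1) := by
    rw [← Finset.sum_neg_distrib, ← Finset.sum_sub_distrib]
    apply Finset.sum_congr rfl
    intro i _
    rw [Nat.choose_succ_succ (n+1) i]
    push_cast
    ring
  have hc : ∑ i ∈ Finset.range (n+2), (-1:ℝ)^i * ((n+1).choose i) * F i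
      = -(∑ i ∈ Finset.range (n+1), (-1:ℝ)^i * ((n+1).choose (i+1)) * F (i+1)) + F 0 := by
    rw [Finset.sum_range_succ' (fun i => (-1:ℝ)^i * ((n+1).choose i) * F i) (n+1),
      ← Finset.sum_neg_distrib]
    simp only [Nat.choose_zero_right, Nat.cast_one, pow_zero, one_mul, mul_one]
    congr 1
    apply Finset.sum_congr rfl
    intro i _
    ring
  have hd : ∑ i ∈ Finset.range (n+2), (-1:ℝ)^i * ((n+1).choose (i+1)) * F (i+1)
      = ∑ i ∈ Finset.range (n+1), (-1:ℝ)^i * ((n+1).choose (i+1)) * F (i+1) := by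
    rw [Finset.sum_range_succ, Nat.choose_eq_zero_of_lt (by omega)]
    simp
  rw [ha, hb, hc, hd]
  ring

lemma bspline_formula (n : ℕ) (x : ℝ) :
    (n.factorial : ℝ) * Bspline (n+1) x
      = ∑ i ∈ Finset.range (n+2), (-1:ℝ)^i * ((n+1).choose i) * tpow n (x - i) := by
  induction n generalizing x with
  | zero =>
    have hb : Bspline (0+1) x = if 0 ≤ x ∧ x < 1 then (1:ℝ) else 0 := rfl
    rw [hb, Finset.sum_range_succ, Finset.sum_range_succ, Finset.sum_range_zero, tpow_zero,
      tpow_zero]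
    norm_num
    rcases le_or_gt 0 x with h0 | h0
    · rcases lt_or_ge x 1 with h1 | h1
      · rw [if_pos ⟨h0, h1⟩, if_pos h0, if_neg (by linarith)]
        norm_num
      · rw [if_neg (fun h => absurd h.2 (not_lt.mpr h1)), if_pos h0, if_pos h1]
        norm_num
    · rw [if_neg (fun h => absurd h.1 (not_le.mpr h0)), if_neg (by linarith),
        if_neg (by linarith)]
      norm_num
  | succ n ih =>
    rw [Bspline_succ]
    have hfac : ((n+1).factorial : ℝ) = ((n:ℝ)+1) * n.factorial := by
      rw [Nat.factorial_succ]; push_cast; ring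
    rw [hfac, mul_assoc, ← intervalIntegral.integral_const_mul]
    have hcong : ∫ y in (x-1)..x, (n.factorial : ℝ) * Bspline (n+1) y
        = ∫ y in (x-1)..x, ∑ i ∈ Finset.range (n+2),
            (-1:ℝ)^i * ((n+1).choose i) * tpow n (y - i) := by
      congr 1; ext y; exact ih y
    have hsum := intervalIntegral.integral_finset_sum (a := x-1) (b := x)
      (μ := MeasureTheory.volume) (s := Finset.range (n+2))
      (f := fun i y => (-1:ℝ)^i * (((n+1).choose i : ℕ) : ℝ) * tpow n (y - i))
      (fun i _ => ((intervalIntegrable_tpow n i (x-1) x).const_mul _))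
    rw [hcong, hsum]
    have hterm : ∀ i ∈ Finset.range (n+2),
        (∫ y in (x-1)..x, (-1:ℝ)^i * ((n+1).choose i) * tpow n (y - i))
        = (-1:ℝ)^i * ((n+1).choose i) * tpow (n+1) (x - i) / ((n:ℝ)+1)
          - (-1:ℝ)^i * ((n+1).choose i) * tpow (n+1) (x - 1 - i) / ((n:ℝ)+1) := by
      intro i _
      rw [intervalIntegral.integral_const_mul, tpow_integral]
      ring
    rw [Finset.sum_congr rfl hterm, Finset.sum_sub_distrib, mul_sub]
    have hn1 : ((n:ℝ)+1) ≠ 0 := by positivity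
    have hL : ((n:ℝ)+1) * ∑ i ∈ Finset.range (n+2),
        (-1:ℝ)^i * ((n+1).choose i) * tpow (n+1) (x - i) / ((n:ℝ)+1)
        = ∑ i ∈ Finset.range (n+2), (-1:ℝ)^i * ((n+1).choose i) * tpow (n+1) (x - i) := by
      rw [Finset.mul_sum]
      apply Finset.sum_congr rfl
      intro i _
      field_simp
    have hR : ((n:ℝ)+1) * ∑ i ∈ Finset.range (n+2),
        (-1:ℝ)^i * ((n+1).choose i) * tpow (n+1) (x - 1 - i) / ((n:ℝ)+1)
        = ∑ i ∈ Finset.range (n+2), (-1:ℝ)^i * ((n+1).choose i) * tpow (n+1) (x - (i+1)) := by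
      rw [Finset.mul_sum]
      apply Finset.sum_congr rfl
      intro i _
      have : x - 1 - (i:ℝ) = x - ((i:ℝ)+1) := by ring
      rw [this]
      field_simp
    rw [hL, hR]
    have := alt_sum_shift n (fun i => tpow (n+1) (x - i))
    simp only [Nat.cast_add, Nat.cast_one] at this ⊢
    push_cast at this ⊢
    rw [show n + 1 + 2 = n + 3 from rfl]
    rw [this]

/-- Number of descents of a permutation `σ` of `{0, …, d-1}`: the number of
indices `i` with `i + 1 < d` and `σ (i+1) < σ i`. -/
def numDescents {d : ℕ} (σ : Equiv.Perm (Fin d)) : ℕ :=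
  (Finset.univ.filter fun i : Fin d =>
    (i : ℕ) + 1 < d ∧ σ ⟨((i : ℕ) + 1) % d, Nat.mod_lt _ i.pos⟩ < σ i).card

/-- Eulerian number `A_{d,k}`: the number of permutations of `{1, …, d}` with exactly
`k - 1` descents; `A_{d,k} = 0` for `k ≤ 0`. -/
def eulerianNumber (d : ℕ) (k : ℤ) : ℕ :=
  if k ≤ 0 then 0
  else (Finset.univ.filter fun σ : Equiv.Perm (Fin d) => (numDescents σ : ℤ) = k - 1).card

/-- the descent set, as a finset of natural numbers -/
def desSet {d : ℕ} (σ : Equiv.Perm (Fin d)) : Finset ℕ :=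
  (Finset.univ.filter fun i : Fin d =>
    (i : ℕ) + 1 < d ∧ σ ⟨((i : ℕ) + 1) % d, Nat.mod_lt _ i.pos⟩ < σ i).image Fin.val

lemma card_desSet {d : ℕ} (σ : Equiv.Perm (Fin d)) : (desSet σ).card = numDescents σ :=
  Finset.card_image_of_injective _ Fin.val_injective

lemma mem_desSet {d : ℕ} (σ : Equiv.Perm (Fin d)) (i : ℕ) :
    i ∈ desSet σ ↔ ∃ (h : i + 1 < d), σ ⟨i+1, h⟩ < σ ⟨i, by omega⟩ := by
  simp only [desSet, Finset.mem_image, Finset.mem_filter, Finset.mem_univ, true_and]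
  constructor
  · rintro ⟨j, ⟨hj1, hj2⟩, rfl⟩
    refine ⟨hj1, ?_⟩
    have e : (⟨((j:ℕ)+1) % d, Nat.mod_lt _ j.pos⟩ : Fin d) = ⟨(j:ℕ)+1, hj1⟩ :=
      Fin.ext (Nat.mod_eq_of_lt hj1)
    rw [e] at hj2
    simpa [Fin.eta] using hj2
  · rintro ⟨h, hlt⟩
    refine ⟨⟨i, by omega⟩, ⟨h, ?_⟩, rfl⟩
    have e : (⟨(i+1) % d, Nat.mod_lt _ (Fin.pos ⟨i, by omega⟩)⟩ : Fin d) = ⟨i+1, h⟩ :=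
      Fin.ext (Nat.mod_eq_of_lt h)
    rw [e]
    exact hlt

lemma mem_desSet_lt {d : ℕ} (σ : Equiv.Perm (Fin d)) {i : ℕ} (h : i ∈ desSet σ) :
    i + 1 < d := by
  rw [mem_desSet] at h
  exact h.1

section insertion

variable {d : ℕ}

lemma succAbove_val (p : Fin (d+1)) (i : Fin d) :
    ((p.succAbove i : Fin (d+1)) : ℕ) = if (i:ℕ) < (p:ℕ) then (i:ℕ) else (i:ℕ)+1 := by
  rw [Fin.succAbove]
  split_ifs with h1 h2 h2
  · rfl
  · exact absurd (by rwa [Fin.lt_def, Fin.coe_castSucc] at h1) h2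
  · exact absurd (by rwa [Fin.lt_def, Fin.coe_castSucc]) h1
  · rfl

/-- insert the largest element at position `p` in the word of `σ` -/
noncomputable def insertPerm (σ : Equiv.Perm (Fin d)) (p : Fin (d+1)) :
    Equiv.Perm (Fin (d+1)) :=
  Equiv.ofBijective (p.insertNth (Fin.last d) (fun j => (σ j).castSucc))
    (Finite.injective_iff_bijective.mp (by
      intro a b hab
      by_cases ha : a = p <;> by_cases hb : b = p
      · rw [ha, hb]
      · exfalso
        obtain ⟨j, hj⟩ := Fin.exists_succAbove_eq hb
        rw [ha, Fin.insertNth_apply_same, ← hj, Fin.insertNth_apply_succAbove] at hab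
        exact Fin.ne_last_of_lt (Fin.castSucc_lt_last (σ j)) hab.symm
      · exfalso
        obtain ⟨j, hj⟩ := Fin.exists_succAbove_eq ha
        rw [hb, Fin.insertNth_apply_same, ← hj, Fin.insertNth_apply_succAbove] at hab
        exact Fin.ne_last_of_lt (Fin.castSucc_lt_last (σ j)) hab
      · obtain ⟨j, hj⟩ := Fin.exists_succAbove_eq ha
        obtain ⟨j', hj'⟩ := Fin.exists_succAbove_eq hb
        rw [← hj, ← hj', Fin.insertNth_apply_succAbove, Fin.insertNth_apply_succAbove] at hab
        rw [← hj, ← hj', σ.injective (Fin.castSucc_injective _ hab)]))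

lemma insertPerm_apply (σ : Equiv.Perm (Fin d)) (p : Fin (d+1)) (x : Fin (d+1)) :
    insertPerm σ p x
      = Fin.insertNth (α := fun _ => Fin (d+1)) p (Fin.last d) (fun j => (σ j).castSucc) x := rfl

lemma insertPerm_apply_same (σ : Equiv.Perm (Fin d)) (p : Fin (d+1)) :
    insertPerm σ p p = Fin.last d := by
  rw [insertPerm_apply]
  exact Fin.insertNth_apply_same p _ _

lemma insertPerm_apply_succAbove (σ : Equiv.Perm (Fin d)) (p : Fin (d+1)) (j : Fin d) :
    insertPerm σ p (p.succAbove j) = (σ j).castSucc := by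
  rw [insertPerm_apply]
  exact Fin.insertNth_apply_succAbove p _ _ _

lemma insertPerm_injective : Function.Injective
    (fun q : Equiv.Perm (Fin d) × Fin (d+1) => insertPerm q.1 q.2) := by
  rintro ⟨σ, p⟩ ⟨σ', p'⟩ h
  simp only at h
  have hp : p = p' := by
    by_contra hne
    obtain ⟨j, hj⟩ := Fin.exists_succAbove_eq hne
    have h1 : insertPerm σ p p = insertPerm σ' p' p := by rw [h]
    rw [insertPerm_apply_same, ← hj, insertPerm_apply_succAbove] at h1
    exact Fin.ne_last_of_lt (Fin.castSucc_lt_last (σ' j)) h1.symm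
  subst hp
  have hσ : σ = σ' := by
    ext j
    have h1 : insertPerm σ p (p.succAbove j) = insertPerm σ' p (p.succAbove j) := by rw [h]
    rw [insertPerm_apply_succAbove, insertPerm_apply_succAbove] at h1
    have := Fin.castSucc_injective _ h1
    simp [this]
  simp [hσ]

lemma insertPerm_surjective : Function.Surjective
    (fun q : Equiv.Perm (Fin d) × Fin (d+1) => insertPerm q.1 q.2) := by
  intro τ
  set p : Fin (d+1) := τ.symm (Fin.last d) with hp
  have hτp : τ p = Fin.last d := τ.apply_symm_apply _
  have hne : ∀ j : Fin d, τ (p.succAbove j) ≠ Fin.last d := by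
    intro j hcontra
    have : p.succAbove j = p := τ.injective (by rw [hτp, hcontra])
    exact Fin.succAbove_ne p j this
  set f : Fin d → Fin d := fun j => (τ (p.succAbove j)).castPred (hne j) with hf
  have hfinj : Function.Injective f := by
    intro a b hab
    have : τ (p.succAbove a) = τ (p.succAbove b) := by
      have := congrArg Fin.castSucc hab
      rwa [Fin.castSucc_castPred, Fin.castSucc_castPred] at this
    exact Fin.succAbove_right_injective (τ.injective this)
  refine ⟨⟨Equiv.ofBijective f (Finite.injective_iff_bijective.mp hfinj), p⟩, ?_⟩
  simp only
  ext i
  rcases eq_or_ne i p with rfl | hi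
  · rw [insertPerm_apply_same, hτp]
  · obtain ⟨j, rfl⟩ := Fin.exists_succAbove_eq hi
    rw [insertPerm_apply_succAbove]
    have he : (Equiv.ofBijective f (Finite.injective_iff_bijective.mp hfinj)) j = f j := rfl
    rw [he, hf]
    exact congrArg Fin.val (Fin.castSucc_castPred (τ (p.succAbove j)) (hne j))

end insertion

section descents

variable {d : ℕ} (σ : Equiv.Perm (Fin d)) (p : Fin (d+1))

/-- word values as a function on ℕ -/
def wv {n : ℕ} (τ : Equiv.Perm (Fin n)) (v : ℕ) : ℕ :=
  if h : v < n then (τ ⟨v, h⟩ : ℕ) else 0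

lemma wv_lt {n : ℕ} (τ : Equiv.Perm (Fin n)) {v : ℕ} (h : v < n) : wv τ v < n := by
  rw [wv, dif_pos h]
  exact (τ ⟨v, h⟩).isLt

lemma mem_desSet' {d : ℕ} (σ : Equiv.Perm (Fin d)) (i : ℕ) :
    i ∈ desSet σ ↔ i + 1 < d ∧ wv σ (i+1) < wv σ i := by
  rw [mem_desSet]
  constructor
  · rintro ⟨h, hlt⟩
    refine ⟨h, ?_⟩
    have h2 := Fin.lt_def.mp hlt
    rw [wv, wv, dif_pos h, dif_pos (by omega : i < d)]
    exact h2
  · rintro ⟨h, hlt⟩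
    refine ⟨h, ?_⟩
    rw [Fin.lt_def]
    rw [wv, wv, dif_pos h, dif_pos (by omega : i < d)] at hlt
    exact hlt

lemma wv_insertPerm_same : wv (insertPerm σ p) (p:ℕ) = d := by
  rw [wv, dif_pos (by omega : (p:ℕ) < d+1)]
  have : (⟨(p:ℕ), by omega⟩ : Fin (d+1)) = p := Fin.ext rfl
  rw [this, insertPerm_apply_same]
  rfl

lemma wv_insertPerm_lt {v : ℕ} (hv : v < (p:ℕ)) (hvd : v < d) :
    wv (insertPerm σ p) v = wv σ v := by
  rw [wv, wv, dif_pos (by omega : v < d+1), dif_pos hvd]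
  have hidx : (⟨v, by omega⟩ : Fin (d+1)) = p.succAbove ⟨v, hvd⟩ := by
    apply Fin.ext
    rw [succAbove_val]
    simp [hv]
  rw [hidx, insertPerm_apply_succAbove, Fin.coe_castSucc]

lemma wv_insertPerm_ge {v : ℕ} (hv : (p:ℕ) ≤ v) (hvd : v < d) :
    wv (insertPerm σ p) (v+1) = wv σ v := by
  rw [wv, wv, dif_pos (by omega : v+1 < d+1), dif_pos hvd]
  have hidx : (⟨v+1, by omega⟩ : Fin (d+1)) = p.succAbove ⟨v, hvd⟩ := by
    apply Fin.ext
    rw [succAbove_val]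
    simp [Nat.not_lt.mpr hv]
  rw [hidx, insertPerm_apply_succAbove, Fin.coe_castSucc]

lemma desSet_insertPerm :
    desSet (insertPerm σ p)
      = (((desSet σ).filter (fun i => i + 1 < (p:ℕ)))
          ∪ ((desSet σ).filter (fun i => (p:ℕ) ≤ i)).image (· + 1))
        ∪ (if (p:ℕ) < d then {(p:ℕ)} else ∅) := by
  have hpd : (p:ℕ) ≤ d := by omega
  ext i
  simp only [Finset.mem_union, Finset.mem_filter, Finset.mem_image, mem_desSet']
  constructor
  · rintro ⟨h1, hlt⟩
    have hi : i < d := by omega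
    rcases Nat.lt_trichotomy (i+1) (p:ℕ) with hc | hc | hc
    · left; left
      have e1 := wv_insertPerm_lt σ p (v := i) (by omega) hi
      have e2 := wv_insertPerm_lt σ p (v := i+1) hc (by omega)
      exact ⟨⟨by omega, by omega⟩, hc⟩
    · exfalso
      have e2 : wv (insertPerm σ p) (i+1) = d := by rw [hc]; exact wv_insertPerm_same σ p
      have e1 := wv_insertPerm_lt σ p (v := i) (by omega) hi
      have e3 := wv_lt σ hi
      omega
    · rcases Nat.eq_or_lt_of_le (Nat.lt_succ_iff.mp hc) with hpi | hpi
      · right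
        rw [if_pos (by omega), Finset.mem_singleton]
        omega
      · left; right
        have e1 : wv (insertPerm σ p) i = wv σ (i-1) := by
          have hrw : i - 1 + 1 = i := by omega
          rw [← hrw]
          exact wv_insertPerm_ge σ p (by omega) (by omega)
        have e2 := wv_insertPerm_ge σ p (v := i) (by omega) hi
        refine ⟨i-1, ⟨⟨by omega, ?_⟩, by omega⟩, by omega⟩
        have hrw : i - 1 + 1 = i := by omega
        rw [hrw]
        omega
  · intro hmem
    rcases hmem with (⟨⟨hd1, hlt⟩, hip⟩ | ⟨j, ⟨⟨hd1, hlt⟩, hpj⟩, rfl⟩) | hsing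
    · refine ⟨by omega, ?_⟩
      have e1 := wv_insertPerm_lt σ p (v := i) (by omega) (by omega)
      have e2 := wv_insertPerm_lt σ p (v := i+1) hip (by omega)
      omega
    · refine ⟨by omega, ?_⟩
      have e1 := wv_insertPerm_ge σ p (v := j) hpj (by omega)
      have e2 := wv_insertPerm_ge σ p (v := j+1) (by omega) hd1
      omega
    · by_cases hpd' : (p:ℕ) < d
      · rw [if_pos hpd', Finset.mem_singleton] at hsing
        subst hsing
        refine ⟨by omega, ?_⟩
        have e1 := wv_insertPerm_same σ p
        have e2 := wv_insertPerm_ge σ p (v := (p:ℕ)) (le_refl _) hpd'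
        have e3 := wv_lt σ (v := (p:ℕ)) hpd'
        omega
      · rw [if_neg hpd'] at hsing
        exact absurd hsing (Finset.notMem_empty _)

end descents

section counting

variable {d : ℕ}

lemma numDescents_insertPerm (σ : Equiv.Perm (Fin d)) (p : Fin (d+1)) :
    numDescents (insertPerm σ p)
      = if (p:ℕ) = d ∨ (0 < (p:ℕ) ∧ ((p:ℕ) - 1) ∈ desSet σ) then numDescents σ
        else numDescents σ + 1 := by
  have hpd : (p:ℕ) ≤ d := by omega
  rw [← card_desSet, desSet_insertPerm]
  have hdisj1 : Disjoint ((desSet σ).filter (fun i => i + 1 < (p:ℕ)))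
      (((desSet σ).filter (fun i => (p:ℕ) ≤ i)).image (· + 1)) := by
    rw [Finset.disjoint_left]
    intro a ha hb
    rw [Finset.mem_filter] at ha
    rw [Finset.mem_image] at hb
    obtain ⟨j, hj, hje⟩ := hb
    rw [Finset.mem_filter] at hj
    have hje' : j + 1 = a := hje
    omega
  have hdisj2 : Disjoint
      ((((desSet σ).filter (fun i => i + 1 < (p:ℕ)))
        ∪ ((desSet σ).filter (fun i => (p:ℕ) ≤ i)).image (· + 1)))
      (if (p:ℕ) < d then ({(p:ℕ)} : Finset ℕ) else ∅) := by
    split_ifs with h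
    · rw [Finset.disjoint_right]
      intro a ha hb
      rw [Finset.mem_singleton] at ha
      subst ha
      rw [Finset.mem_union, Finset.mem_filter, Finset.mem_image] at hb
      rcases hb with h1 | ⟨j, hj, heq⟩
      · omega
      · rw [Finset.mem_filter] at hj
        have hje' : j + 1 = (p:ℕ) := heq
        omega
    · exact Finset.disjoint_empty_right _
  rw [Finset.card_union_of_disjoint hdisj2, Finset.card_union_of_disjoint hdisj1,
    Finset.card_image_of_injective _ (add_left_injective 1)]
  have hsplit : ((desSet σ).filter (fun i => i + 1 < (p:ℕ))).card
      + ((desSet σ).filter (fun i => (p:ℕ) ≤ i)).card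
      = ((desSet σ).filter (fun i => i + 1 ≠ (p:ℕ))).card := by
    rw [← Finset.card_union_of_disjoint (by
      rw [Finset.disjoint_left]
      intro a ha hb
      rw [Finset.mem_filter] at ha hb
      omega), ← Finset.filter_or]
    apply congrArg Finset.card
    apply Finset.filter_congr
    intro x hx
    have := mem_desSet_lt σ hx
    omega
  rw [hsplit]
  have hcompl := Finset.card_filter_add_card_filter_not
    (s := desSet σ) (p := fun i => i + 1 ≠ (p:ℕ))
  rw [card_desSet] at hcompl
  by_cases hgood : (p:ℕ) = d ∨ (0 < (p:ℕ) ∧ ((p:ℕ) - 1) ∈ desSet σ)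
  · rw [if_pos hgood]
    rcases hgood with hgd | ⟨hg0, hgm⟩
    · -- p = d : no new descent, nothing removed
      have h1 : (desSet σ).filter (fun i => i + 1 ≠ (p:ℕ)) = desSet σ := by
        apply Finset.filter_true_of_mem
        intro i hi
        have := mem_desSet_lt σ hi
        omega
      rw [h1, if_neg (by omega), card_desSet]
      simp
    · -- 0 < p, p-1 descent: one removed, one added
      have hplt : (p:ℕ) < d := by
        have := mem_desSet_lt σ hgm
        omega
      have h2 : (desSet σ).filter (fun i => ¬ (i + 1 ≠ (p:ℕ))) = {(p:ℕ) - 1} := by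
        ext a
        rw [Finset.mem_filter, Finset.mem_singleton]
        constructor
        · rintro ⟨_, h⟩; omega
        · rintro rfl
          exact ⟨hgm, by omega⟩
      rw [h2] at hcompl
      rw [if_pos hplt]
      simp only [Finset.card_singleton] at hcompl ⊢
      omega
  · rw [if_neg hgood]
    push_neg at hgood
    obtain ⟨hgd, hg2⟩ := hgood
    have h1 : (desSet σ).filter (fun i => i + 1 ≠ (p:ℕ)) = desSet σ := by
      apply Finset.filter_true_of_mem
      intro i hi hcontra
      have h0 : 0 < (p:ℕ) := by omega
      have := hg2 h0
      have : ((p:ℕ) - 1) = i := by omega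
      subst this
      exact (hg2 h0) hi
    rw [h1, if_pos (by omega), card_desSet]
    simp

lemma card_good (σ : Equiv.Perm (Fin d)) :
    (Finset.univ.filter fun p : Fin (d+1) =>
        (p:ℕ) = d ∨ (0 < (p:ℕ) ∧ ((p:ℕ) - 1) ∈ desSet σ)).card
      = numDescents σ + 1 := by
  rw [← Finset.card_image_of_injective _ Fin.val_injective]
  have himg : (Finset.univ.filter fun p : Fin (d+1) =>
      (p:ℕ) = d ∨ (0 < (p:ℕ) ∧ ((p:ℕ) - 1) ∈ desSet σ)).image Fin.val
      = insert d ((desSet σ).image (· + 1)) := by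
    ext i
    simp only [Finset.mem_image, Finset.mem_filter, Finset.mem_univ, true_and,
      Finset.mem_insert]
    constructor
    · rintro ⟨q, hq, rfl⟩
      rcases hq with h | ⟨h0, hm⟩
      · exact Or.inl h
      · exact Or.inr ⟨(q:ℕ) - 1, hm, by omega⟩
    · rintro (rfl | ⟨j, hj, rfl⟩)
      · exact ⟨⟨i, by omega⟩, Or.inl rfl, rfl⟩
      · have := mem_desSet_lt σ hj
        exact ⟨⟨j+1, by omega⟩, Or.inr ⟨by simp, by simpa using hj⟩, rfl⟩
  rw [himg, Finset.card_insert_of_notMem (by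
    rw [Finset.mem_image]
    rintro ⟨j, hj, heq⟩
    have := mem_desSet_lt σ hj
    have hje' : j + 1 = d := heq
    omega),
    Finset.card_image_of_injective _ (add_left_injective 1),
    card_desSet]

end counting

section recurrence

lemma card_filter_prod {α β : Type*} [Fintype α] [Fintype β] [DecidableEq α]
    (P : α × β → Prop) [DecidablePred P] :
    (Finset.univ.filter P).card = ∑ a : α, (Finset.univ.filter fun b => P (a, b)).card := by
  rw [Finset.card_eq_sum_card_fiberwise (f := Prod.fst) (t := Finset.univ)
    (fun x _ => Finset.mem_univ _)]
  apply Finset.sum_congr rfl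
  intro a _
  apply Finset.card_bij (fun q _ => q.2)
  · rintro ⟨a', b⟩ hq
    rw [Finset.mem_filter, Finset.mem_filter] at hq
    obtain ⟨⟨_, hP⟩, ha⟩ := hq
    simp only at ha
    subst ha
    rw [Finset.mem_filter]
    exact ⟨Finset.mem_univ _, hP⟩
  · rintro ⟨a1, b1⟩ h1 ⟨a2, b2⟩ h2 heq
    rw [Finset.mem_filter, Finset.mem_filter] at h1 h2
    simp only at heq h1 h2
    rw [Prod.mk.injEq]
    exact ⟨h1.2.trans h2.2.symm, heq⟩
  · intro b hb
    rw [Finset.mem_filter] at hb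
    refine ⟨(a, b), ?_, rfl⟩
    rw [Finset.mem_filter, Finset.mem_filter]
    exact ⟨⟨Finset.mem_univ _, hb.2⟩, rfl⟩

lemma eulerian_card_rec (d : ℕ) (k : ℤ) :
    (Finset.univ.filter fun τ : Equiv.Perm (Fin (d+1)) => (numDescents τ : ℤ) = k - 1).card
      = ∑ σ : Equiv.Perm (Fin d),
          (Finset.univ.filter fun p : Fin (d+1) =>
            (numDescents (insertPerm σ p) : ℤ) = k - 1).card := by
  rw [← card_filter_prod (fun q : Equiv.Perm (Fin d) × Fin (d+1) =>
    (numDescents (insertPerm q.1 q.2) : ℤ) = k - 1)]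
  apply Finset.card_bij (fun τ _ => Function.surjInv insertPerm_surjective τ)
  · intro τ hτ
    rw [Finset.mem_filter] at hτ ⊢
    refine ⟨Finset.mem_univ _, ?_⟩
    have hs : insertPerm (Function.surjInv insertPerm_surjective τ).1
        (Function.surjInv insertPerm_surjective τ).2 = τ :=
      Function.surjInv_eq insertPerm_surjective τ
    rw [hs]
    exact hτ.2
  · intro τ1 _ τ2 _ heq
    have h1 := Function.surjInv_eq insertPerm_surjective τ1
    have h2 := Function.surjInv_eq insertPerm_surjective τ2
    rw [← h1, ← h2, heq]
  · intro q hq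
    rw [Finset.mem_filter] at hq
    refine ⟨insertPerm q.1 q.2, ?_, ?_⟩
    · rw [Finset.mem_filter]
      exact ⟨Finset.mem_univ _, hq.2⟩
    · apply insertPerm_injective
      exact Function.surjInv_eq insertPerm_surjective _

lemma numDescents_le {d : ℕ} (σ : Equiv.Perm (Fin d)) : numDescents σ + 1 ≤ d + 1 := by
  have : numDescents σ ≤ Fintype.card (Fin d) := by
    rw [numDescents]
    exact le_trans (Finset.card_filter_le _ _) (le_of_eq (Finset.card_univ))
  simp at this
  omega

lemma fiber_card {d : ℕ} (σ : Equiv.Perm (Fin d)) (k : ℤ) :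
    (Finset.univ.filter fun p : Fin (d+1) =>
        (numDescents (insertPerm σ p) : ℤ) = k - 1).card
      = (if (numDescents σ : ℤ) = k - 1 then numDescents σ + 1 else 0)
        + (if (numDescents σ : ℤ) = k - 2 then d - numDescents σ else 0) := by
  set n := numDescents σ with hn
  have hgoodbad : ∀ p : Fin (d+1),
      (numDescents (insertPerm σ p) : ℤ)
        = if (p:ℕ) = d ∨ (0 < (p:ℕ) ∧ ((p:ℕ) - 1) ∈ desSet σ) then (n:ℤ) else (n:ℤ) + 1 := by
    intro p
    rw [numDescents_insertPerm]
    split_ifs <;> push_cast <;> ring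
  by_cases h1 : (n:ℤ) = k - 1
  · rw [if_pos h1, if_neg (by omega)]
    have : (Finset.univ.filter fun p : Fin (d+1) =>
        (numDescents (insertPerm σ p) : ℤ) = k - 1)
        = (Finset.univ.filter fun p : Fin (d+1) =>
            (p:ℕ) = d ∨ (0 < (p:ℕ) ∧ ((p:ℕ) - 1) ∈ desSet σ)) := by
      apply Finset.filter_congr
      intro p _
      rw [hgoodbad p]
      split_ifs with hg
      · exact iff_of_true h1 hg
      · exact iff_of_false (by omega) hg
    rw [this, card_good]
  · rw [if_neg h1]
    by_cases h2 : (n:ℤ) = k - 2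
    · rw [if_pos h2]
      have hset : (Finset.univ.filter fun p : Fin (d+1) =>
          (numDescents (insertPerm σ p) : ℤ) = k - 1)
          = (Finset.univ.filter fun p : Fin (d+1) =>
              ¬((p:ℕ) = d ∨ (0 < (p:ℕ) ∧ ((p:ℕ) - 1) ∈ desSet σ))) := by
        apply Finset.filter_congr
        intro p _
        rw [hgoodbad p]
        split_ifs with hg
        · exact iff_of_false (by omega) (not_not_intro hg)
        · exact iff_of_true (by omega) hg
      rw [hset]
      have hcompl := Finset.card_filter_add_card_filter_not
        (s := (Finset.univ : Finset (Fin (d+1))))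
        (p := fun p : Fin (d+1) => (p:ℕ) = d ∨ (0 < (p:ℕ) ∧ ((p:ℕ) - 1) ∈ desSet σ))
      rw [card_good, Finset.card_univ] at hcompl
      simp only [Fintype.card_fin] at hcompl
      have hle := numDescents_le σ
      omega
    · rw [if_neg h2]
      have hset : (Finset.univ.filter fun p : Fin (d+1) =>
          (numDescents (insertPerm σ p) : ℤ) = k - 1) = ∅ := by
        apply Finset.filter_false_of_mem
        intro p _
        rw [hgoodbad p]
        split_ifs <;> omega
      rw [hset]
      simp

lemma sum_ite_card {α : Type*} [Fintype α] (P : α → Prop) [DecidablePred P] (c : ℤ) :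
    ∑ a : α, (if P a then c else 0) = (Finset.univ.filter P).card * c := by
  rw [← Finset.sum_filter]
  rw [Finset.sum_const, nsmul_eq_mul]

lemma eulerian_rec (d : ℕ) (k : ℤ) (hk : 1 ≤ k) :
    (eulerianNumber (d+1) k : ℤ)
      = k * eulerianNumber d k + ((d:ℤ) + 2 - k) * eulerianNumber d (k - 1) := by
  rw [eulerianNumber, if_neg (by omega)]
  rw [eulerian_card_rec, Nat.cast_sum]
  have hterm : ∀ σ : Equiv.Perm (Fin d),
      ((Finset.univ.filter fun p : Fin (d+1) =>
          (numDescents (insertPerm σ p) : ℤ) = k - 1).card : ℤ)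
        = (if (numDescents σ : ℤ) = k - 1 then k else 0)
          + (if (numDescents σ : ℤ) = k - 2 then (d:ℤ) + 2 - k else 0) := by
    intro σ
    rw [fiber_card σ k]
    push_cast
    have hle := numDescents_le σ
    split_ifs with h1 h2 h2 <;> push_cast <;> try omega
  rw [Finset.sum_congr rfl (fun σ _ => hterm σ), Finset.sum_add_distrib,
    sum_ite_card, sum_ite_card]
  rw [eulerianNumber, if_neg (by omega)]
  by_cases hk1 : k = 1
  · subst hk1
    rw [eulerianNumber, if_pos (by omega)]
    have : (Finset.univ.filter fun σ : Equiv.Perm (Fin d) =>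
        (numDescents σ : ℤ) = 1 - 2).card = 0 := by
      rw [Finset.card_eq_zero]
      apply Finset.filter_false_of_mem
      intro σ _
      omega
    rw [this]
    push_cast
    ring
  · rw [eulerianNumber, if_neg (by omega)]
    have : ∀ σ : Equiv.Perm (Fin d), ((numDescents σ : ℤ) = k - 2) ↔ ((numDescents σ : ℤ) = k - 1 - 1) := by
      intro σ; constructor <;> intro <;> omega
    rw [Finset.filter_congr (fun σ _ => this σ)]
    ring

lemma numDescents_perm_zero (σ : Equiv.Perm (Fin 0)) : numDescents σ = 0 := by
  rw [numDescents]
  simp [Finset.univ_eq_empty]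

lemma eulerian_formula (d k : ℕ) :
    (eulerianNumber d (k:ℤ) : ℤ)
      = ∑ i ∈ Finset.range k, (-1:ℤ)^i * ((d+1).choose i) * ((k:ℤ) - i)^d := by
  induction d generalizing k with
  | zero =>
    match k with
    | 0 => simp [eulerianNumber]
    | 1 =>
      rw [eulerianNumber, if_neg (by omega)]
      have hall : (Finset.univ.filter fun σ : Equiv.Perm (Fin 0) =>
          (numDescents σ : ℤ) = ((1:ℕ):ℤ) - 1) = Finset.univ := by
        apply Finset.filter_true_of_mem
        intro σ _
        rw [numDescents_perm_zero σ]
        norm_num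
      rw [hall, Finset.card_univ]
      simp [Fintype.card_perm]
    | (k+2) =>
      rw [eulerianNumber, if_neg (by omega)]
      have h0 : (Finset.univ.filter fun σ : Equiv.Perm (Fin 0) =>
          (numDescents σ : ℤ) = ((k+2:ℕ):ℤ) - 1) = ∅ := by
        apply Finset.filter_false_of_mem
        intro σ _
        rw [numDescents_perm_zero σ]
        push_cast
        omega
      rw [h0]
      have hz : ∀ i ∈ Finset.range (k+2),
          (-1:ℤ)^i * ((0+1).choose i) * (((k+2:ℕ):ℤ) - i)^0 = (-1:ℤ)^i * ((1).choose i) := by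
        intro i _
        rw [pow_zero]
        norm_num
      rw [Finset.sum_congr rfl hz]
      have h2 : ∑ i ∈ Finset.range (k+2), (-1:ℤ)^i * ((1).choose i)
          = ∑ i ∈ Finset.range 2, (-1:ℤ)^i * ((1).choose i) := by
        symm
        apply Finset.sum_subset (Finset.range_subset_range.mpr (by omega))
        intro x _ hx
        rw [Finset.mem_range] at hx
        rw [Nat.choose_eq_zero_of_lt (by omega)]
        simp
      rw [h2]
      decide
  | succ d ih =>
    match k with
    | 0 => simp [eulerianNumber]
    | (k'+1) =>
      have hrec := eulerian_rec d ((k'+1:ℕ):ℤ) (by push_cast; omega)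
      rw [hrec, ih (k'+1), show ((k'+1:ℕ):ℤ) - 1 = ((k':ℕ):ℤ) by push_cast; ring, ih k']
      set K : ℤ := ((k'+1:ℕ):ℤ) with hK
      set cc : ℕ → ℤ := fun i => if i = 0 then 0 else ((d+1).choose (i-1) : ℤ) with hcc
      have key : ∀ i : ℕ, (K - i) * ((d+2).choose i : ℤ)
          = K * ((d+1).choose i : ℤ) - ((d:ℤ)+2-K) * cc i := by
        intro i
        match i with
        | 0 => simp [hcc]
        | (i+1) =>
          have hpas : ((d+2).choose (i+1) : ℤ)
              = ((d+1).choose i : ℤ) + ((d+1).choose (i+1) : ℤ) := by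
            exact_mod_cast congrArg Nat.cast (Nat.choose_succ_succ (d+1) i)
          have hmul : ((i:ℤ)+1) * ((d+2).choose (i+1) : ℤ)
              = ((d:ℤ)+2) * ((d+1).choose i : ℤ) := by
            have := Nat.add_one_mul_choose_eq (d+1) i
            push_cast at this ⊢
            linarith [this]
          have hcv : cc (i+1) = ((d+1).choose i : ℤ) := by simp [hcc]
          rw [hcv]
          push_cast
          linear_combination K * hpas - hmul
      have hsplit : ∑ i ∈ Finset.range (k'+1), (-1:ℤ)^i * ((d+1+1).choose i) * (K - i)^(d+1)
          = K * (∑ i ∈ Finset.range (k'+1), (-1:ℤ)^i * ((d+1).choose i) * (K - i)^d)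
            - ((d:ℤ)+2-K) * ∑ i ∈ Finset.range (k'+1), (-1:ℤ)^i * cc i * (K - i)^d := by
        rw [Finset.mul_sum, Finset.mul_sum, ← Finset.sum_sub_distrib]
        apply Finset.sum_congr rfl
        intro i _
        have hkey := key i
        have hp : (K - i)^(d+1) = (K - i) * (K - i)^d := by ring
        rw [hp]
        linear_combination ((-1:ℤ)^i * (K - i)^d) * hkey
      have hshift : ∑ i ∈ Finset.range (k'+1), (-1:ℤ)^i * cc i * (K - i)^d
          = - ∑ i ∈ Finset.range k', (-1:ℤ)^i * ((d+1).choose i) * (((k':ℕ):ℤ) - i)^d := by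
        rw [Finset.sum_range_succ' (fun i => (-1:ℤ)^i * cc i * (K - i)^d) k']
        have h0 : (-1:ℤ)^0 * cc 0 * (K - (0:ℕ))^d = 0 := by simp [hcc]
        rw [h0, add_zero, ← Finset.sum_neg_distrib]
        apply Finset.sum_congr rfl
        intro i _
        have hcv : cc (i+1) = ((d+1).choose i : ℤ) := by simp [hcc]
        rw [hcv]
        have harg : K - ((i+1:ℕ):ℤ) = ((k':ℕ):ℤ) - i := by rw [hK]; push_cast; ring
        rw [harg]
        ring
      rw [hsplit, hshift]
      ring

theorem eulerian_eq_bspline (d k : ℕ) (hd : 1 ≤ d) (hk : 1 ≤ k) :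
    (eulerianNumber d (k : ℤ) : ℝ) = (d.factorial : ℝ) * Bspline (d + 1) (k : ℝ) := by
  obtain ⟨m, rfl⟩ : ∃ m, d = m + 1 := ⟨d - 1, by omega⟩
  rw [bspline_formula (m+1) (k:ℝ)]
  have hz := eulerian_formula (m+1) k
  have hls := congrArg (Int.cast : ℤ → ℝ) hz
  push_cast at hls
  rw [hls]
  set N : ℕ := max (m+3) k with hN
  have hfk : ∀ i : ℕ, (-1:ℝ)^i * ((m+2).choose i) * tpow (m+1) ((k:ℝ) - i)
      = if i < k then (-1:ℝ)^i * ((m+2).choose i) * ((k:ℝ) - i)^(m+1) else 0 := by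
    intro i
    rw [tpow_succ]
    split_ifs with h
    · rw [max_eq_left]
      have : (i:ℝ) + 1 ≤ (k:ℝ) := by exact_mod_cast Nat.succ_le_of_lt h
      linarith
    · rw [max_eq_right, zero_pow (Nat.succ_ne_zero m), mul_zero]
      have : (k:ℝ) ≤ (i:ℝ) := by exact_mod_cast Nat.not_lt.mp h
      linarith
  have h1 : ∑ i ∈ Finset.range (m+1+2), (-1:ℝ)^i * ((m+1+1).choose i) * tpow (m+1) ((k:ℝ) - i)
      = ∑ i ∈ Finset.range N, (-1:ℝ)^i * ((m+2).choose i) * tpow (m+1) ((k:ℝ) - i) := by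
    apply Finset.sum_subset (Finset.range_subset_range.mpr (by omega))
    intro x _ hx
    rw [Finset.mem_range] at hx
    rw [Nat.choose_eq_zero_of_lt (by omega)]
    simp
  have h2 : ∑ i ∈ Finset.range N, (-1:ℝ)^i * ((m+2).choose i) * tpow (m+1) ((k:ℝ) - i)
      = ∑ i ∈ Finset.range k, (-1:ℝ)^i * ((m+2).choose i) * ((k:ℝ) - i)^(m+1) := by
    rw [Finset.sum_congr rfl (fun i _ => hfk i), ← Finset.sum_filter]
    apply Finset.sum_congr
    · ext i
      simp only [Finset.mem_filter, Finset.mem_range]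
      omega
    · intro _ _; rfl
  rw [h1, h2]
end recurrence
end

section
/- For all integers d ≥ 1 and k ≥ 0, and all real λ ≥ 0: Σ_{j=0}^{d} C(d,j) · 𝐀_{d+1,k,d−j+1} · λ^j = d! · (λ+1)^d · B_{d+1}(k + 1/(λ+1)), where B_{d+1} is the cardinal B-spline of order d+1. -/
open MeasureTheory Real Filter Finset

/-- Refined Eulerian number `𝐀_{d,k,j}`: the number of permutations of `{1, …, d}` with
exactly `k` descents and last entry equal to `j`. -/
def refinedEulerian (d : ℕ) (k : ℤ) (j : ℕ) : ℕ :=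
  if h : 0 < d then
    (Finset.univ.filter fun σ : Equiv.Perm (Fin d) =>
      (numDescents σ : ℤ) = k ∧ ((σ ⟨d - 1, Nat.sub_lt h one_pos⟩ : ℕ) + 1 = j)).card
  else 0

/-- descents as a sum over `Fin e`. -/
lemma numDescents_succ (e : ℕ) (σ : Equiv.Perm (Fin (e+1))) :
    numDescents σ = ∑ i : Fin e, (if σ i.succ < σ i.castSucc then 1 else 0) := by
  rw [numDescents, Finset.card_filter]
  rw [Fin.sum_univ_castSucc]
  simp only [Fin.val_last, lt_self_iff_false, false_and, if_false, add_zero]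
  apply Finset.sum_congr rfl
  intro i _
  have h1 : ((i.castSucc : ℕ) + 1 < e + 1) := by simpa using i.isLt
  have h2 : (⟨((i.castSucc : ℕ) + 1) % (e+1), Nat.mod_lt _ (i.castSucc).pos⟩ : Fin (e+1)) = i.succ := by
    apply Fin.ext
    simp [Nat.mod_eq_of_lt (by omega : (i : ℕ) + 1 < e + 1)]
  rw [h2]
  simp [h1]

/-- insertion map: given `p : Perm (Fin (e+1))` and `j : Fin (e+2)`, produce the permutation of
`Fin (e+2)` whose value at the last position is `j` and whose other values are
`j.succAbove ∘ p`. -/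
def insPerm (e : ℕ) (j : Fin (e+2)) (p : Equiv.Perm (Fin (e+1))) : Equiv.Perm (Fin (e+2)) :=
  (finSuccEquivLast.trans (Equiv.optionCongr p)).trans (finSuccEquiv' j).symm

lemma insPerm_castSucc (e : ℕ) (j : Fin (e+2)) (p : Equiv.Perm (Fin (e+1))) (i : Fin (e+1)) :
    insPerm e j p i.castSucc = j.succAbove (p i) := by
  simp [insPerm]

lemma insPerm_last (e : ℕ) (j : Fin (e+2)) (p : Equiv.Perm (Fin (e+1))) :
    insPerm e j p (Fin.last (e+1)) = j := by
  simp [insPerm]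

lemma numDescents_insPerm (e : ℕ) (j : Fin (e+2)) (p : Equiv.Perm (Fin (e+1))) :
    numDescents (insPerm e j p)
      = numDescents p + (if (j : ℕ) ≤ (p (Fin.last e) : ℕ) then 1 else 0) := by
  rw [numDescents_succ (e+1), numDescents_succ e, Fin.sum_univ_castSucc]
  congr 1
  · apply Finset.sum_congr rfl
    intro i _
    have h1 : (i.castSucc).succ = (i.succ).castSucc := (Fin.succ_castSucc i).symm
    rw [h1, insPerm_castSucc, insPerm_castSucc]
    simp [Fin.succAbove_lt_succAbove_iff]
  · have h1 : (Fin.last e).succ = Fin.last (e+1) := Fin.succ_last e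
    rw [h1, insPerm_last, insPerm_castSucc]
    have : j < j.succAbove (p (Fin.last e)) ↔ (j : ℕ) ≤ (p (Fin.last e) : ℕ) := by
      rw [Fin.lt_succAbove_iff_le_castSucc]
      simp [Fin.le_iff_val_le_val]
    simp [this]

lemma insPerm_inj (e : ℕ) (j : Fin (e+2)) : Function.Injective (insPerm e j) := by
  intro p q h
  ext i
  have := congrArg (fun σ : Equiv.Perm (Fin (e+2)) => σ i.castSucc) h
  simp only [insPerm_castSucc] at this
  exact congrArg Fin.val (Fin.succAbove_right_injective this)

lemma insPerm_surj (e : ℕ) (j : Fin (e+2)) (σ : Equiv.Perm (Fin (e+2)))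
    (hσ : σ (Fin.last (e+1)) = j) : ∃ p, insPerm e j p = σ := by
  set τ : Option (Fin (e+1)) ≃ Option (Fin (e+1)) :=
    (finSuccEquivLast.symm.trans σ).trans (finSuccEquiv' j) with hτ
  have hnone : τ none = none := by
    simp [hτ, hσ]
  refine ⟨Equiv.removeNone τ, ?_⟩
  have hcongr : Equiv.optionCongr (Equiv.removeNone τ) = τ := by
    ext x : 1
    cases x with
    | none => simp [hnone]
    | some a =>
        simp only [Equiv.optionCongr_apply, Option.map_some]
        have hs : ∃ b, τ (some a) = some b := by
          cases h2 : τ (some a) with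
          | none => exact absurd (τ.injective (h2.trans hnone.symm)) (by simp)
          | some b => exact ⟨b, rfl⟩
        exact Equiv.removeNone_some τ hs
  ext x
  simp [insPerm, hcongr, hτ, hσ]

lemma refinedEulerian_pos (d : ℕ) (h : 0 < d) (k : ℤ) (j : ℕ) :
    refinedEulerian d k j = (Finset.univ.filter fun σ : Equiv.Perm (Fin d) =>
      (numDescents σ : ℤ) = k ∧ ((σ ⟨d - 1, Nat.sub_lt h one_pos⟩ : ℕ) + 1 = j)).card := by
  rw [refinedEulerian, dif_pos h]

lemma refinedEulerian_neg (d : ℕ) (k : ℤ) (j : ℕ) (hk : k < 0) : refinedEulerian d k j = 0 := by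
  rw [refinedEulerian]
  split
  · convert Finset.card_empty
    rw [Finset.filter_eq_empty_iff]
    intro σ _
    rintro ⟨h1, -⟩
    omega
  · rfl

lemma rec_global (e : ℕ) (k : ℤ) (j : Fin (e+2)) :
    refinedEulerian (e+2) k ((j : ℕ)+1)
      = ∑ v : Fin (e+1),
          refinedEulerian (e+1) (if (j : ℕ) ≤ (v : ℕ) then k-1 else k) ((v : ℕ)+1) := by
  rw [refinedEulerian_pos _ (by omega)]
  have hmk : (⟨e + 2 - 1, Nat.sub_lt (by omega) one_pos⟩ : Fin (e+2)) = Fin.last (e+1) := rfl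
  rw [hmk]
  have key : (Finset.univ.filter fun σ : Equiv.Perm (Fin (e+2)) =>
        (numDescents σ : ℤ) = k ∧ ((σ (Fin.last (e+1)) : ℕ) + 1 = (j : ℕ)+1)).card
      = (Finset.univ.filter fun p : Equiv.Perm (Fin (e+1)) =>
        (numDescents p : ℤ) + (if (j : ℕ) ≤ (p (Fin.last e) : ℕ) then 1 else 0) = k).card := by
    symm
    apply Finset.card_bij (fun p _ => insPerm e j p)
    · intro p hp
      simp only [Finset.mem_filter, Finset.mem_univ, true_and] at hp ⊢
      constructor
      · rw [numDescents_insPerm]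
        push_cast [apply_ite (fun n : ℕ => (n : ℤ))] at hp ⊢
        exact hp
      · rw [insPerm_last]
    · intro p _ q _ h
      exact insPerm_inj e j h
    · intro σ hσ
      simp only [Finset.mem_filter, Finset.mem_univ, true_and] at hσ
      obtain ⟨h1, h2⟩ := hσ
      have hlast : σ (Fin.last (e+1)) = j := Fin.val_injective (by omega)
      obtain ⟨p, hp⟩ := insPerm_surj e j σ hlast
      refine ⟨p, ?_, hp⟩
      simp only [Finset.mem_filter, Finset.mem_univ, true_and]
      have h5 := numDescents_insPerm e j p
      rw [hp] at h5
      have h4 : (numDescents σ : ℤ) = (numDescents p : ℤ)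
          + (if (j : ℕ) ≤ ((p (Fin.last e)) : ℕ) then 1 else 0) := by
        rw [h5]
        push_cast [apply_ite (fun n : ℕ => (n : ℤ))]
        ring
      omega
  rw [key, Finset.card_eq_sum_card_fiberwise
    (f := fun p : Equiv.Perm (Fin (e+1)) => p (Fin.last e)) (t := Finset.univ)
    (fun _ _ => Finset.mem_univ _)]
  apply Finset.sum_congr rfl
  intro v _
  rw [refinedEulerian_pos _ (by omega)]
  have hmk2 : (⟨e + 1 - 1, Nat.sub_lt (by omega) one_pos⟩ : Fin (e+1)) = Fin.last e := rfl
  rw [hmk2]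
  congr 1
  rw [Finset.filter_filter]
  apply Finset.filter_congr
  intro p _
  constructor
  · rintro ⟨h1, h2⟩
    rw [h2] at h1 ⊢
    constructor
    · split_ifs at h1 ⊢ <;> omega
    · rfl
  · rintro ⟨h1, h2⟩
    have h3 : p (Fin.last e) = v := Fin.val_injective (by omega)
    rw [h3]
    constructor
    · split_ifs at h1 ⊢ <;> omega
    · rfl

lemma rec_global' (e : ℕ) (k : ℤ) (j : ℕ) (hj : j ≤ e + 1) :
    refinedEulerian (e+2) k (j+1)
      = ∑ v ∈ Finset.range (e+1),
          refinedEulerian (e+1) (if j ≤ v then k-1 else k) (v+1) := by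
  have h := rec_global e k ⟨j, by omega⟩
  rw [← Fin.sum_univ_eq_sum_range
    (fun v => refinedEulerian (e+1) (if j ≤ v then k-1 else k) (v+1)) (e+1)]
  exact h

lemma rec_local (e : ℕ) (k : ℤ) (j : ℕ) (hj : j ≤ e) :
    (refinedEulerian (e+2) k (j+2) : ℤ) + refinedEulerian (e+1) (k-1) (j+1)
      = (refinedEulerian (e+2) k (j+1) : ℤ) + refinedEulerian (e+1) k (j+1) := by
  have h1 := rec_global' e k (j+1) (by omega)
  have h2 := rec_global' e k j (by omega)
  have hsum : (∑ v ∈ Finset.range (e+1),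
        (refinedEulerian (e+1) (if j+1 ≤ v then k-1 else k) (v+1) : ℤ))
      - ∑ v ∈ Finset.range (e+1),
        (refinedEulerian (e+1) (if j ≤ v then k-1 else k) (v+1) : ℤ)
      = (refinedEulerian (e+1) k (j+1) : ℤ) - refinedEulerian (e+1) (k-1) (j+1) := by
    rw [← Finset.sum_sub_distrib, Finset.sum_eq_single j]
    · rw [if_neg (by omega), if_pos (le_refl j)]
    · intro v _ hv
      rw [if_congr (show j+1 ≤ v ↔ j ≤ v by omega) rfl rfl, sub_self]
    · intro h
      exact absurd (Finset.mem_range.2 (by omega)) h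
  have c1 : (refinedEulerian (e+2) k (j+2) : ℤ) = ∑ v ∈ Finset.range (e+1),
      (refinedEulerian (e+1) (if j+1 ≤ v then k-1 else k) (v+1) : ℤ) := by
    rw [show j + 2 = (j+1) + 1 from rfl, h1]; push_cast; rfl
  have c2 : (refinedEulerian (e+2) k (j+1) : ℤ) = ∑ v ∈ Finset.range (e+1),
      (refinedEulerian (e+1) (if j ≤ v then k-1 else k) (v+1) : ℤ) := by
    rw [h2]; push_cast; rfl
  omega

lemma rec_wrap (e : ℕ) (k : ℤ) :
    refinedEulerian (e+2) k (e+2) = refinedEulerian (e+2) (k+1) 1 := by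
  have h1 := rec_global' e k (e+1) (le_refl _)
  have h2 := rec_global' e (k+1) 0 (by omega)
  rw [show e + 2 = (e+1)+1 from rfl, h1, show (1:ℕ) = 0 + 1 from rfl, h2]
  apply Finset.sum_congr rfl
  intro v hv
  rw [Finset.mem_range] at hv
  rw [if_neg (by omega), if_pos (by omega), show k + 1 - 1 = k by ring]

lemma bern_term_deriv (j m : ℕ) (t : ℝ) :
    HasDerivAt (fun s : ℝ => (1-s)^j * s^m)
      (-(j:ℝ) * (1-t)^(j-1) * t^m + (m:ℝ) * ((1-t)^j * t^(m-1))) t := by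
  have h1 : HasDerivAt (fun s : ℝ => (1-s)^j) (-(j:ℝ) * (1-t)^(j-1)) t := by
    have h := (hasDerivAt_pow j (1-t)).comp t ((hasDerivAt_const t (1:ℝ)).sub (hasDerivAt_id t))
    refine h.congr_deriv ?_
    ring
  have h2 := hasDerivAt_pow m t
  have h3 := h1.mul h2
  refine h3.congr_deriv ?_
  ring

lemma bern_deriv (n : ℕ) (a : ℕ → ℝ) (t : ℝ) :
    HasDerivAt (fun s => ∑ j ∈ Finset.range (n+2),
        ((n+1).choose j : ℝ) * a j * ((1-s)^j * s^(n+1-j)))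
      (((n:ℝ)+1) * ∑ j ∈ Finset.range (n+1),
        (n.choose j : ℝ) * (a j - a (j+1)) * ((1-t)^j * t^(n-j))) t := by
  have hterm : ∀ j ∈ Finset.range (n+2),
      HasDerivAt (fun s : ℝ => ((n+1).choose j : ℝ) * a j * ((1-s)^j * s^(n+1-j)))
        (((n+1).choose j : ℝ) * a j *
          (-(j:ℝ) * (1-t)^(j-1) * t^(n+1-j) + ((n+1-j : ℕ):ℝ) * ((1-t)^j * t^(n+1-j-1)))) t :=
    fun j _ => (bern_term_deriv j (n+1-j) t).const_mul _
  have hsum := HasDerivAt.fun_sum hterm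
  refine hsum.congr_deriv ?_; symm
  have expand : ∀ j ∈ Finset.range (n+2),
      ((n+1).choose j : ℝ) * a j *
          (-(j:ℝ) * (1-t)^(j-1) * t^(n+1-j) + ((n+1-j : ℕ):ℝ) * ((1-t)^j * t^(n+1-j-1)))
        = (((n+1).choose j : ℝ) * a j * (-(j:ℝ) * (1-t)^(j-1) * t^(n+1-j)))
          + (((n+1).choose j : ℝ) * a j * (((n+1-j : ℕ):ℝ) * ((1-t)^j * t^(n+1-j-1)))) :=
    fun j _ => by ring
  rw [Finset.sum_congr rfl expand, Finset.sum_add_distrib]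
  have hSA : (∑ j ∈ Finset.range (n+2),
      ((n+1).choose j : ℝ) * a j * (-(j:ℝ) * (1-t)^(j-1) * t^(n+1-j)))
      = ∑ j ∈ Finset.range (n+1),
        -(((n:ℝ)+1) * ((n.choose j : ℝ) * a (j+1) * ((1-t)^j * t^(n-j)))) := by
    rw [Finset.sum_range_succ']
    simp only [Nat.cast_zero, neg_zero, zero_mul, mul_zero, add_zero]
    apply Finset.sum_congr rfl
    intro j _
    have hc0 : (n+1).choose (j+1) * (j+1) = (n+1) * n.choose j :=
      (Nat.add_one_mul_choose_eq n j).symm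
    have hc : ((n+1).choose (j+1) : ℝ) * ((j:ℝ)+1) = ((n:ℝ)+1) * (n.choose j : ℝ) := by
      exact_mod_cast hc0
    have e1 : (j+1) - 1 = j := rfl
    have e2 : n+1-(j+1) = n-j := by omega
    rw [e1, e2]
    push_cast
    linear_combination (-(a (j+1) * ((1-t)^j * t^(n-j)))) * hc
  have hSB : (∑ j ∈ Finset.range (n+2),
      ((n+1).choose j : ℝ) * a j * (((n+1-j : ℕ):ℝ) * ((1-t)^j * t^(n+1-j-1))))
      = ∑ j ∈ Finset.range (n+1),
        ((n:ℝ)+1) * ((n.choose j : ℝ) * a j * ((1-t)^j * t^(n-j))) := by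
    rw [Finset.sum_range_succ]
    simp only [Nat.sub_self, Nat.cast_zero, zero_mul, mul_zero, add_zero]
    apply Finset.sum_congr rfl
    intro j hj
    rw [Finset.mem_range] at hj
    have hc0 : (n+1).choose j * (n+1-j) = (n+1) * n.choose j := by
      rw [← Nat.choose_mul_succ_eq n j]; ring
    have hc : ((n+1).choose j : ℝ) * ((n+1-j : ℕ):ℝ) = ((n:ℝ)+1) * (n.choose j : ℝ) := by
      exact_mod_cast hc0
    have e2 : n+1-j-1 = n-j := by omega
    rw [e2]
    linear_combination (a j * ((1-t)^j * t^(n-j))) * hc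
  rw [hSA, hSB, Finset.mul_sum, ← Finset.sum_add_distrib]
  apply Finset.sum_congr rfl
  intro j _
  ring

noncomputable def Pf (d : ℕ) (k : ℤ) (t : ℝ) : ℝ :=
  ∑ j ∈ Finset.range (d+1),
    (d.choose j : ℝ) * (refinedEulerian (d+1) k (d-j+1) : ℝ) * ((1-t)^j * t^(d-j))

noncomputable def Qf (d : ℕ) (k : ℤ) (t : ℝ) : ℝ :=
  ∑ i ∈ Finset.range (d+2),
    if (i:ℤ) ≤ k then (-1:ℝ)^i * (((d+1).choose i : ℕ) : ℝ) * ((k:ℝ) - (i:ℕ) + t)^d else 0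

lemma Pf_hasDeriv (n : ℕ) (k : ℤ) (t : ℝ) :
    HasDerivAt (fun s => Pf (n+1) k s) (((n:ℝ)+1) * (Pf n k t - Pf n (k-1) t)) t := by
  have h := bern_deriv n (fun j => (refinedEulerian (n+2) k (n+1-j+1) : ℝ)) t
  have hval : ((n:ℝ)+1) * (Pf n k t - Pf n (k-1) t)
      = ((n:ℝ)+1) * ∑ j ∈ Finset.range (n+1),
        (n.choose j : ℝ) * ((refinedEulerian (n+2) k (n+1-j+1) : ℝ)
          - (refinedEulerian (n+2) k (n+1-(j+1)+1) : ℝ)) * ((1-t)^j * t^(n-j)) := by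
    congr 1
    rw [Pf, Pf, ← Finset.sum_sub_distrib]
    apply Finset.sum_congr rfl
    intro j hj
    rw [Finset.mem_range] at hj
    have hrec := rec_local n k (n-j) (by omega)
    have h1 : n + 1 - j + 1 = (n-j) + 2 := by omega
    have h2 : n + 1 - (j+1) + 1 = (n-j) + 1 := by omega
    have h3 : n - j + 1 = (n-j) + 1 := rfl
    rw [h1, h2, h3]
    have hR : (refinedEulerian (n+2) k ((n-j)+2) : ℝ) - (refinedEulerian (n+2) k ((n-j)+1) : ℝ)
        = (refinedEulerian (n+1) k ((n-j)+1) : ℝ) - (refinedEulerian (n+1) (k-1) ((n-j)+1) : ℝ) := by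
      exact_mod_cast congrArg (fun z : ℤ => (z : ℝ))
        (by omega : (refinedEulerian (n+2) k ((n-j)+2) : ℤ) - (refinedEulerian (n+2) k ((n-j)+1) : ℤ)
          = (refinedEulerian (n+1) k ((n-j)+1) : ℤ) - (refinedEulerian (n+1) (k-1) ((n-j)+1) : ℤ))
    linear_combination (-((n.choose j : ℝ) * ((1-t)^j * t^(n-j)))) * hR
  rw [hval]
  exact h

lemma Qf_hasDeriv (n : ℕ) (k : ℤ) (t : ℝ) :
    HasDerivAt (fun s => Qf (n+1) k s) (((n:ℝ)+1) * (Qf n k t - Qf n (k-1) t)) t := by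
  classical
  set X : ℕ → ℝ := fun i => ((k:ℝ) - (i:ℕ) + t)^n with hX
  set g : ℕ → ℝ := fun i => if (i:ℤ) ≤ k then (-1:ℝ)^i * (((n+1).choose i : ℕ) : ℝ) * X i else 0
    with hg
  set h : ℕ → ℝ := fun i =>
    if (i:ℤ)+1 ≤ k then (-1:ℝ)^i * (((n+1).choose i : ℕ) : ℝ) * X (i+1) else 0 with hh
  set D : ℕ → ℝ := fun i =>
    if (i:ℤ) ≤ k then (-1:ℝ)^i * (((n+2).choose i : ℕ) : ℝ) * (((n:ℝ)+1) * X i) else 0 with hD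
  have hterm : ∀ i ∈ Finset.range (n+3),
      HasDerivAt (fun s : ℝ =>
        if (i:ℤ) ≤ k then (-1:ℝ)^i * (((n+2).choose i : ℕ) : ℝ) * ((k:ℝ) - (i:ℕ) + s)^(n+1) else 0)
        (D i) t := by
    intro i _
    by_cases hik : (i:ℤ) ≤ k
    · simp only [hD, if_pos hik]
      have hb : HasDerivAt (fun s : ℝ => ((k:ℝ) - (i:ℕ) + s)) 1 t :=
        (hasDerivAt_id t).const_add ((k:ℝ) - (i:ℕ))
      have hp := ((hasDerivAt_pow (n+1) ((k:ℝ) - (i:ℕ) + t)).comp t hb).const_mul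
        ((-1:ℝ)^i * (((n+2).choose i : ℕ) : ℝ))
      refine hp.congr_deriv ?_; symm
      simp only [hX]
      push_cast
      ring
    · simp only [hD, if_neg hik]
      exact hasDerivAt_const t 0
  have hsum := HasDerivAt.fun_sum hterm
  have hfun : (fun s => Qf (n+1) k s) = (fun s => ∑ i ∈ Finset.range (n+3),
      if (i:ℤ) ≤ k then (-1:ℝ)^i * (((n+2).choose i : ℕ) : ℝ) * ((k:ℝ) - (i:ℕ) + s)^(n+1) else 0) := by
    rfl
  rw [hfun]
  have hval : (∑ i ∈ Finset.range (n+3), D i) = ((n:ℝ)+1) * (Qf n k t - Qf n (k-1) t) := by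
    have hQk : Qf n k t = ∑ i ∈ Finset.range (n+2), g i := rfl
    have hQk1 : Qf n (k-1) t = ∑ i ∈ Finset.range (n+2), h i := by
      apply Finset.sum_congr rfl
      intro i _
      rw [hh]
      simp only []
      rw [if_congr (show ((i:ℤ) ≤ k - 1) ↔ ((i:ℤ)+1 ≤ k) by omega) rfl rfl]
      by_cases hik : (i:ℤ)+1 ≤ k
      · rw [if_pos hik, if_pos hik]
        congr 1
        rw [hX]
        push_cast
        ring_nf
      · rw [if_neg hik, if_neg hik]
    have hS : ∑ i ∈ Finset.range (n+3), g i = Qf n k t := by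
      rw [Finset.sum_range_succ, hQk]
      have : g (n+2) = 0 := by
        rw [hg]
        simp [Nat.choose_eq_zero_of_lt (by omega : n+1 < n+2)]
      rw [this, add_zero]
    have hterm2 : ∀ i ∈ Finset.range (n+2), D (i+1) = ((n:ℝ)+1) * (g (i+1) - h i) := by
      intro i _
      by_cases hik : (i:ℤ)+1 ≤ k
      · have hik' : ((i+1:ℕ):ℤ) ≤ k := by push_cast; omega
        rw [hD, hg, hh]
        simp only [if_pos hik, if_pos hik']
        have hch : (((n+2).choose (i+1) : ℕ) : ℝ)
            = (((n+1).choose i : ℕ) : ℝ) + (((n+1).choose (i+1) : ℕ) : ℝ) := by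
          exact_mod_cast congrArg (fun x : ℕ => (x:ℝ)) (Nat.choose_succ_succ (n+1) i)
        rw [hch, pow_succ]
        ring
      · have hik' : ¬ ((i+1:ℕ):ℤ) ≤ k := by push_cast; omega
        rw [hD, hg, hh]
        simp only [if_neg hik, if_neg hik']
        ring
    have hD0 : D 0 = ((n:ℝ)+1) * g 0 := by
      rw [hD, hg]
      by_cases h0 : ((0:ℕ):ℤ) ≤ k
      · simp only [if_pos h0]
        norm_num
      · simp only [if_neg h0]
        ring
    rw [Finset.sum_range_succ' D (n+2), Finset.sum_congr rfl hterm2, hD0, hQk1, ← hS,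
      Finset.sum_range_succ' g (n+2)]
    rw [← Finset.mul_sum, Finset.sum_sub_distrib]
    ring
  rw [← hval]
  exact hsum

lemma refinedEulerian_one (k : ℤ) : refinedEulerian 1 k 1 = if k = 0 then 1 else 0 := by
  rw [refinedEulerian_pos 1 one_pos]
  have hnd : ∀ σ : Equiv.Perm (Fin 1), numDescents σ = 0 := by
    intro σ
    rw [numDescents]
    apply Finset.card_eq_zero.2
    rw [Finset.filter_eq_empty_iff]
    intro i _
    rintro ⟨hlt, -⟩
    omega
  have hval : ∀ σ : Equiv.Perm (Fin 1), ((σ ⟨0, by omega⟩ : Fin 1) : ℕ) + 1 = 1 := by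
    intro σ
    have := (σ ⟨0, by omega⟩).isLt
    omega
  by_cases hk : k = 0
  · rw [if_pos hk]
    have : (Finset.univ.filter fun σ : Equiv.Perm (Fin 1) =>
        (numDescents σ : ℤ) = k ∧ ((σ ⟨1 - 1, Nat.sub_lt one_pos one_pos⟩ : ℕ) + 1 = 1))
        = Finset.univ := by
      rw [Finset.filter_eq_self]
      intro σ _
      exact ⟨by rw [hnd]; omega, hval σ⟩
    rw [this, Finset.card_univ]
    simp
  · rw [if_neg hk]
    convert Finset.card_empty
    rw [Finset.filter_eq_empty_iff]
    intro σ _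
    rintro ⟨h1, -⟩
    rw [hnd] at h1
    exact hk (by omega)

lemma Pf_neg (d : ℕ) (k : ℤ) (hk : k < 0) (t : ℝ) : Pf d k t = 0 := by
  rw [Pf]
  apply Finset.sum_eq_zero
  intro j _
  rw [refinedEulerian_neg _ _ _ hk]
  norm_num

lemma Qf_neg (d : ℕ) (k : ℤ) (hk : k < 0) (t : ℝ) : Qf d k t = 0 := by
  rw [Qf]
  apply Finset.sum_eq_zero
  intro i _
  rw [if_neg (by omega)]

lemma Pf_zero (d : ℕ) (k : ℤ) : Pf d k 0 = refinedEulerian (d+1) k 1 := by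
  rw [Pf, Finset.sum_eq_single d]
  · simp
  · intro j hj hne
    rw [Finset.mem_range] at hj
    have : (0:ℝ)^(d-j) = 0 := zero_pow (by omega)
    rw [this]
    ring
  · intro h
    exact absurd (Finset.mem_range.2 (by omega)) h

lemma Pf_one (d : ℕ) (k : ℤ) : Pf d k 1 = refinedEulerian (d+1) k (d+1) := by
  rw [Pf, Finset.sum_eq_single 0]
  · simp
  · intro j hj hne
    have : ((1:ℝ)-1)^j = 0 := by
      rw [show (1:ℝ)-1 = 0 by ring]
      exact zero_pow hne
    rw [this]
    ring
  · intro h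
    exact absurd (Finset.mem_range.2 (by omega)) h

lemma Qf_step (d : ℕ) (hd : 1 ≤ d) (k : ℤ) : Qf d (k+1) 0 = Qf d k 1 := by
  rw [Qf, Qf]
  apply Finset.sum_congr rfl
  intro i _
  by_cases h1 : (i:ℤ) ≤ k
  · rw [if_pos (by omega), if_pos h1]
    congr 1
    push_cast
    ring
  · by_cases h2 : (i:ℤ) = k+1
    · rw [if_pos (by omega), if_neg h1]
      have hb : ((k+1:ℤ):ℝ) - (i:ℕ) + 0 = 0 := by
        push_cast
        rw [show ((i:ℕ):ℝ) = ((i:ℤ):ℝ) by push_cast; ring, h2]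
        push_cast
        ring
      rw [hb, zero_pow (by omega)]
      ring
    · rw [if_neg (by omega), if_neg h1]

theorem PQ : ∀ d : ℕ, ∀ k : ℤ, ∀ t : ℝ, Pf d k t = Qf d k t := by
  intro d
  induction d with
  | zero =>
      intro k t
      have hP : Pf 0 k t = ((refinedEulerian 1 k 1 : ℕ) : ℝ) := by
        rw [Pf, Finset.sum_range_one]
        norm_num
      rw [hP, refinedEulerian_one, Qf, Finset.sum_range_succ, Finset.sum_range_one]
      push_cast [apply_ite (fun n : ℕ => (n : ℝ))]
      split_ifs with h1 h2 h3 <;> first | (exfalso; omega) | norm_num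
  | succ n ih =>
      have hconst : ∀ (k : ℤ) (t s : ℝ),
          Pf (n+1) k t - Qf (n+1) k t = Pf (n+1) k s - Qf (n+1) k s := by
        intro k t s
        have hf : ∀ u : ℝ, HasDerivAt (fun v => Pf (n+1) k v - Qf (n+1) k v) 0 u := by
          intro u
          have h1 := Pf_hasDeriv n k u
          have h2 := Qf_hasDeriv n k u
          have h3 := h1.sub h2
          have : ((n:ℝ)+1) * (Pf n k u - Pf n (k-1) u)
              - ((n:ℝ)+1) * (Qf n k u - Qf n (k-1) u) = 0 := by
            rw [ih k u, ih (k-1) u]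
            ring
          rwa [this] at h3
        exact is_const_of_deriv_eq_zero
          (fun u => (hf u).differentiableAt) (fun u => (hf u).deriv) t s
      have hnat : ∀ m : ℕ, ∀ t : ℝ, Pf (n+1) (m:ℤ) t - Qf (n+1) (m:ℤ) t = 0 := by
        intro m
        induction m with
        | zero =>
            intro t
            rw [Nat.cast_zero, hconst 0 t 0]
            have e2 : Qf (n+1) (0:ℤ) 0 = Qf (n+1) ((-1)+1) 0 := by norm_num
            rw [e2, Qf_step (n+1) (by omega) (-1), Qf_neg _ _ (by omega)]
            rw [Pf_zero]
            have hw : refinedEulerian (n+2) ((-1:ℤ)+1) 1 = 0 := by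
              rw [← rec_wrap n (-1), refinedEulerian_neg _ _ _ (by omega)]
            have hw' : refinedEulerian (n+2) (0:ℤ) 1 = 0 := by
              rw [show (0:ℤ) = (-1:ℤ)+1 by ring]
              exact hw
            rw [show n+1+1 = n+2 from rfl, hw']
            norm_num
        | succ m ihm =>
            intro t
            rw [hconst _ t 0]
            rw [show ((m+1 : ℕ) : ℤ) = (m:ℤ)+1 by push_cast; ring]
            rw [Qf_step (n+1) (by omega) (m:ℤ)]
            have ePf : Pf (n+1) ((m:ℤ)+1) 0 = Pf (n+1) (m:ℤ) 1 := by
              rw [Pf_zero, Pf_one, show n+1+1 = n+2 from rfl, rec_wrap n (m:ℤ)]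
            rw [ePf]
            exact ihm 1
      intro k t
      rcases lt_or_ge k 0 with hk | hk
      · rw [Pf_neg _ _ hk, Qf_neg _ _ hk]
      · obtain ⟨m, rfl⟩ := Int.eq_ofNat_of_zero_le hk
        linarith [hnat m t]

lemma tp_hasDeriv (m : ℕ) (c y : ℝ) :
    HasDerivAt (fun z : ℝ => max (z - c) 0 ^ (m+2))
      (((m:ℝ)+2) * max (y - c) 0 ^ (m+1)) y := by
  rcases lt_trichotomy y c with h | h | h
  · have hev : (fun z : ℝ => max (z - c) 0 ^ (m+2)) =ᶠ[nhds y] (fun _ => (0:ℝ)) := by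
      filter_upwards [Iio_mem_nhds h] with z hz
      rw [Set.mem_Iio] at hz
      rw [max_eq_right (by linarith), zero_pow (by omega)]
    have h0 : HasDerivAt (fun _ : ℝ => (0:ℝ)) 0 y := hasDerivAt_const y 0
    have := h0.congr_of_eventuallyEq hev
    refine this.congr_deriv ?_; symm
    rw [max_eq_right (by linarith), zero_pow (by omega)]
    ring
  · subst h
    rw [hasDerivAt_iff_tendsto_slope]
    have hval : ((m:ℝ)+2) * max (y - y) 0 ^ (m+1) = 0 := by
      rw [sub_self, max_self, zero_pow (by omega)]
      ring
    rw [hval]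
    refine squeeze_zero_norm (f := slope (fun z : ℝ => max (z - y) 0 ^ (m+2)) y)
      (a := fun z : ℝ => |z - y| ^ (m+1)) (fun z => ?_) ?_
    · rw [slope_def_field]
      have hfy : max (y - y) 0 ^ (m+2) = (0:ℝ) := by
        rw [sub_self, max_self, zero_pow (by omega)]
      rw [hfy, sub_zero]
      by_cases hz : z = y
      · subst hz
        simp
      · have habs : (0:ℝ) < |z - y| := abs_pos.2 (sub_ne_zero.2 hz)
        rw [Real.norm_eq_abs, abs_div, abs_of_nonneg (pow_nonneg (le_max_right _ _) _),
          div_le_iff₀ habs]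
        calc max (z - y) 0 ^ (m+2) ≤ |z - y| ^ (m+2) := by
              apply pow_le_pow_left₀ (le_max_right _ _)
              exact max_le (le_abs_self _) (abs_nonneg _)
          _ = |z - y| ^ (m+1) * |z - y| := by rw [← pow_succ]
    · have hcont : Tendsto (fun z : ℝ => |z - y| ^ (m+1)) (nhds y) (nhds (|y - y| ^ (m+1))) := by
        apply Tendsto.pow
        exact (continuous_id.sub continuous_const).abs.tendsto y
      rw [sub_self, abs_zero, zero_pow (by omega)] at hcont
      exact hcont.mono_left nhdsWithin_le_nhds
  · have hev : (fun z : ℝ => max (z - c) 0 ^ (m+2)) =ᶠ[nhds y] (fun z => (z - c) ^ (m+2)) := by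
      filter_upwards [Ioi_mem_nhds h] with z hz
      rw [Set.mem_Ioi] at hz
      rw [max_eq_left (by linarith)]
    have hpow : HasDerivAt (fun z : ℝ => (z - c) ^ (m+2))
        (((m+2:ℕ):ℝ) * (y - c) ^ (m+1) * 1) y := by
      exact (hasDerivAt_pow (m+2) (y - c)).comp y ((hasDerivAt_id y).sub_const c)
    have := hpow.congr_of_eventuallyEq hev
    refine this.congr_deriv ?_; symm
    rw [max_eq_left (by linarith)]
    push_cast
    ring

lemma Bspline_conv (n : ℕ) (x : ℝ) :
    Bspline (n+2) x = ∫ y in Set.Ioc (x-1) x, Bspline (n+1) y := by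
  show (∫ y : ℝ, (if 0 ≤ x - y ∧ x - y < 1 then (1 : ℝ) else 0) * Bspline (n + 1) y)
      = ∫ y in Set.Ioc (x-1) x, Bspline (n+1) y
  have hpt : ∀ y : ℝ, (if 0 ≤ x - y ∧ x - y < 1 then (1:ℝ) else 0) * Bspline (n+1) y
      = Set.indicator (Set.Ioc (x-1) x) (fun y => Bspline (n+1) y) y := by
    intro y
    rw [Set.indicator_apply]
    by_cases h : y ∈ Set.Ioc (x-1) x
    · rw [Set.mem_Ioc] at h
      rw [if_pos ⟨by linarith [h.2], by linarith [h.1]⟩, if_pos (Set.mem_Ioc.2 h), one_mul]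
    · rw [Set.mem_Ioc] at h
      rw [if_neg, if_neg (fun hc => h (Set.mem_Ioc.1 hc)), zero_mul]
      intro hc
      exact h ⟨by linarith [hc.2], by linarith [hc.1]⟩
  simp_rw [hpt]
  exact MeasureTheory.integral_indicator measurableSet_Ioc

lemma Bspline_two (x : ℝ) :
    Bspline 2 x = max x 0 - 2 * max (x-1) 0 + max (x-2) 0 := by
  rw [Bspline_conv 0 x]
  have h1 : ∀ y : ℝ, Bspline 1 y = Set.indicator (Set.Ico (0:ℝ) 1) (fun _ => (1:ℝ)) y := by
    intro y
    show (if 0 ≤ y ∧ y < 1 then (1:ℝ) else 0) = _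
    rw [Set.indicator_apply]
    by_cases h : y ∈ Set.Ico (0:ℝ) 1
    · rw [Set.mem_Ico] at h
      rw [if_pos h, if_pos (Set.mem_Ico.2 h)]
    · rw [Set.mem_Ico] at h
      rw [if_neg h, if_neg (fun hc => h (Set.mem_Ico.1 hc))]
  simp_rw [h1]
  rw [MeasureTheory.setIntegral_indicator measurableSet_Ico]
  rw [MeasureTheory.setIntegral_const]
  rw [smul_eq_mul, mul_one]
  have hmeas : volume (Set.Ioc (x-1) x ∩ Set.Ico 0 1)
      = volume (Set.Ioc (x-1) x ∩ Set.Ioc 0 1) := by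
    apply MeasureTheory.measure_congr
    exact (Filter.EventuallyEq.refl _ _).inter MeasureTheory.Ico_ae_eq_Ioc
  rw [measureReal_def, hmeas, Set.Ioc_inter_Ioc, Real.volume_Ioc]
  have hto : ∀ r : ℝ, (ENNReal.ofReal r).toReal = max r 0 := by
    intro r
    rcases le_total 0 r with h | h
    · rw [ENNReal.toReal_ofReal h, max_eq_left h]
    · rw [ENNReal.ofReal_eq_zero.2 h, ENNReal.toReal_zero, max_eq_right h]
  rw [hto]
  simp only [max_def, min_def]
  split_ifs <;> linarith

lemma pascal_sum (d : ℕ) (x : ℝ) :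
    (∑ i ∈ Finset.range (d+3), (-1:ℝ)^i * ((d+2).choose i : ℝ) * max (x - i) 0 ^ (d+2))
    - (∑ i ∈ Finset.range (d+3), (-1:ℝ)^i * ((d+2).choose i : ℝ) * max (x - 1 - i) 0 ^ (d+2))
    = ∑ i ∈ Finset.range (d+4), (-1:ℝ)^i * ((d+3).choose i : ℝ) * max (x - i) 0 ^ (d+2) := by
  have hS2 : (∑ i ∈ Finset.range (d+3),
        (-1:ℝ)^i * ((d+2).choose i : ℝ) * max (x - 1 - i) 0 ^ (d+2))
      = ∑ i ∈ Finset.range (d+3),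
        (-1:ℝ)^i * ((d+2).choose i : ℝ) * max (x - ((i+1:ℕ):ℝ)) 0 ^ (d+2) := by
    apply Finset.sum_congr rfl
    intro i _
    have harg : x - 1 - (i:ℝ) = x - ((i+1:ℕ):ℝ) := by push_cast; ring
    rw [harg]
  rw [hS2]
  rw [Finset.sum_range_succ'
    (fun i => (-1:ℝ)^i * ((d+3).choose i : ℝ) * max (x - i) 0 ^ (d+2)) (d+3)]
  rw [Finset.sum_range_succ'
    (fun i => (-1:ℝ)^i * ((d+2).choose i : ℝ) * max (x - i) 0 ^ (d+2)) (d+2)]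
  have hext : (∑ i ∈ Finset.range (d+3),
        (-1:ℝ)^(i+1) * ((d+2).choose (i+1) : ℝ) * max (x - ((i+1:ℕ):ℝ)) 0 ^ (d+2))
      = ∑ i ∈ Finset.range (d+2),
        (-1:ℝ)^(i+1) * ((d+2).choose (i+1) : ℝ) * max (x - ((i+1:ℕ):ℝ)) 0 ^ (d+2) := by
    rw [Finset.sum_range_succ]
    simp [Nat.choose_eq_zero_of_lt (show d+2 < d+2+1 by omega)]
  rw [← hext]
  have hterm : ∀ i ∈ Finset.range (d+3),
      (-1:ℝ)^(i+1) * ((d+3).choose (i+1) : ℝ) * max (x - ((i+1:ℕ):ℝ)) 0 ^ (d+2)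
      = (-1:ℝ)^(i+1) * ((d+2).choose (i+1) : ℝ) * max (x - ((i+1:ℕ):ℝ)) 0 ^ (d+2)
        - (-1:ℝ)^i * ((d+2).choose i : ℝ) * max (x - ((i+1:ℕ):ℝ)) 0 ^ (d+2) := by
    intro i _
    have hch : (((d+3).choose (i+1) : ℕ) : ℝ)
        = (((d+2).choose i : ℕ) : ℝ) + (((d+2).choose (i+1) : ℕ) : ℝ) := by
      exact_mod_cast congrArg (fun z : ℕ => (z:ℝ)) (Nat.choose_succ_succ (d+2) i)
    rw [hch, pow_succ]
    ring
  rw [Finset.sum_congr rfl hterm, Finset.sum_sub_distrib]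
  norm_num
  ring

lemma Bspline_formula (d : ℕ) : ∀ x : ℝ, Bspline (d+2) x
    = (1/((d+1).factorial : ℝ)) * ∑ i ∈ Finset.range (d+3),
        (-1:ℝ)^i * ((d+2).choose i : ℝ) * max (x - i) 0 ^ (d+1) := by
  induction d with
  | zero =>
      intro x
      rw [Bspline_two]
      rw [Finset.sum_range_succ, Finset.sum_range_succ, Finset.sum_range_one]
      norm_num
      ring
  | succ d ih =>
      intro x
      rw [Bspline_conv (d+1) x]
      simp_rw [ih]
      rw [← intervalIntegral.integral_of_le (by linarith : x - 1 ≤ x)]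
      set c : ℝ := (1/((d+1).factorial : ℝ)) with hc
      set F : ℝ → ℝ := fun y => c * ∑ i ∈ Finset.range (d+3),
        (-1:ℝ)^i * ((d+2).choose i : ℝ) * (max (y - i) 0 ^ (d+2) / ((d:ℝ)+2)) with hF
      have hderiv : ∀ y ∈ Set.uIcc (x-1) x, HasDerivAt F
          (c * ∑ i ∈ Finset.range (d+3),
            (-1:ℝ)^i * ((d+2).choose i : ℝ) * max (y - i) 0 ^ (d+1)) y := by
        intro y _
        have hterm : ∀ i ∈ Finset.range (d+3),
            HasDerivAt (fun y : ℝ =>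
              (-1:ℝ)^i * ((d+2).choose i : ℝ) * (max (y - i) 0 ^ (d+2) / ((d:ℝ)+2)))
              ((-1:ℝ)^i * ((d+2).choose i : ℝ) * max (y - i) 0 ^ (d+1)) y := by
          intro i _
          have hne : ((d:ℝ)+2) ≠ 0 := by positivity
          have h1 := (tp_hasDeriv d (i:ℝ) y).const_mul
            ((-1:ℝ)^i * ((d+2).choose i : ℝ) / ((d:ℝ)+2))
          have hfun : (fun y : ℝ => (-1:ℝ)^i * ((d+2).choose i : ℝ)
                * (max (y - i) 0 ^ (d+2) / ((d:ℝ)+2)))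
              = (fun y : ℝ => (-1:ℝ)^i * ((d+2).choose i : ℝ) / ((d:ℝ)+2)
                * max (y - i) 0 ^ (d+2)) := by
            funext z
            ring
          have hval : (-1:ℝ)^i * ((d+2).choose i : ℝ) / ((d:ℝ)+2)
                * (((d:ℝ)+2) * max (y - i) 0 ^ (d+1))
              = (-1:ℝ)^i * ((d+2).choose i : ℝ) * max (y - i) 0 ^ (d+1) := by
            field_simp
          rw [hfun, ← hval]
          exact h1
        exact (HasDerivAt.fun_sum hterm).const_mul c
      have hcont : Continuous (fun y : ℝ => c * ∑ i ∈ Finset.range (d+3),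
          (-1:ℝ)^i * ((d+2).choose i : ℝ) * max (y - i) 0 ^ (d+1)) := by
        apply Continuous.mul continuous_const
        apply continuous_finset_sum
        intro i _
        exact Continuous.mul continuous_const
          (((continuous_id.sub continuous_const).max continuous_const).pow (d+1))
      rw [intervalIntegral.integral_eq_sub_of_hasDerivAt hderiv
        (hcont.intervalIntegrable (x-1) x)]
      rw [hF]
      simp only []
      have hfac : ((d+2).factorial : ℝ) = ((d:ℝ)+2) * ((d+1).factorial : ℝ) := by
        rw [show d+2 = (d+1)+1 from rfl, Nat.factorial_succ]
        push_cast
        ring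
      have hA : c * (∑ i ∈ Finset.range (d+3),
            (-1:ℝ)^i * ((d+2).choose i : ℝ) * (max (x - i) 0 ^ (d+2) / ((d:ℝ)+2)))
          = (c/((d:ℝ)+2)) * ∑ i ∈ Finset.range (d+3),
            (-1:ℝ)^i * ((d+2).choose i : ℝ) * max (x - i) 0 ^ (d+2) := by
        rw [Finset.mul_sum, Finset.mul_sum]
        apply Finset.sum_congr rfl
        intro i _
        ring
      have hB : c * (∑ i ∈ Finset.range (d+3),
            (-1:ℝ)^i * ((d+2).choose i : ℝ) * (max (x - 1 - i) 0 ^ (d+2) / ((d:ℝ)+2)))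
          = (c/((d:ℝ)+2)) * ∑ i ∈ Finset.range (d+3),
            (-1:ℝ)^i * ((d+2).choose i : ℝ) * max (x - 1 - i) 0 ^ (d+2) := by
        rw [Finset.mul_sum, Finset.mul_sum]
        apply Finset.sum_congr rfl
        intro i _
        ring
      rw [hA, hB, ← mul_sub, pascal_sum d x]
      rw [show d+1+3 = d+4 from rfl, show d+1+1 = d+2 from rfl, show d+1+2 = d+3 from rfl]
      congr 1
      have hne1 : ((d+1).factorial : ℝ) ≠ 0 := by
        exact_mod_cast (Nat.factorial_pos (d+1)).ne'
      have hne2 : ((d:ℝ)+2) ≠ 0 := by positivity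
      rw [hc, hfac]
      field_simp

theorem refined_eulerian_generating (d k : ℕ) (hd : 1 ≤ d) (lam : ℝ) (hlam : 0 ≤ lam) :
    ∑ j ∈ Finset.range (d + 1),
        (d.choose j : ℝ) * (refinedEulerian (d + 1) (k : ℤ) (d - j + 1) : ℝ) * lam ^ j =
      (d.factorial : ℝ) * (lam + 1) ^ d * Bspline (d + 1) ((k : ℝ) + 1 / (lam + 1)) := by
  obtain ⟨e, rfl⟩ : ∃ e, d = e + 1 := ⟨d - 1, by omega⟩
  set t : ℝ := 1 / (lam + 1) with ht
  have hl1 : (0:ℝ) < lam + 1 := by linarith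
  have htpos : 0 < t := by positivity
  have htle : t ≤ 1 := by
    rw [ht, div_le_one hl1]
    linarith
  have htl1 : t * (lam + 1) = 1 := by
    rw [ht]
    field_simp
  have h1t : 1 - t = lam * t := by
    rw [ht]
    field_simp; ring
  have hL : (∑ j ∈ Finset.range (e + 1 + 1),
      ((e+1).choose j : ℝ) * (refinedEulerian (e + 1 + 1) (k : ℤ) (e + 1 - j + 1) : ℝ) * lam ^ j)
      = Pf (e+1) (k:ℤ) t * (lam + 1)^(e+1) := by
    rw [Pf, Finset.sum_mul]
    apply Finset.sum_congr rfl
    intro j hj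
    rw [Finset.mem_range] at hj
    have key : (1-t)^j * t^(e+1-j) * (lam+1)^(e+1) = lam^j := by
      have hpow : t ^ j * t ^ (e+1-j) = t ^ (e+1) := by
        rw [← pow_add, show j + (e+1-j) = e+1 by omega]
      have hone : t ^ (e+1) * (lam+1)^(e+1) = 1 := by
        rw [← mul_pow, htl1, one_pow]
      calc (1-t)^j * t^(e+1-j) * (lam+1)^(e+1)
          = (lam*t)^j * t^(e+1-j) * (lam+1)^(e+1) := by rw [h1t]
        _ = lam^j * (t^j * t^(e+1-j) * (lam+1)^(e+1)) := by rw [mul_pow]; ring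
        _ = lam^j * (t^(e+1) * (lam+1)^(e+1)) := by rw [hpow]
        _ = lam^j := by rw [hone, mul_one]
    calc ((e+1).choose j : ℝ) * (refinedEulerian (e+1+1) (k:ℤ) (e+1-j+1) : ℝ) * lam ^ j
        = ((e+1).choose j : ℝ) * (refinedEulerian (e+1+1) (k:ℤ) (e+1-j+1) : ℝ)
          * ((1-t)^j * t^(e+1-j) * (lam+1)^(e+1)) := by rw [key]
      _ = ((e+1).choose j : ℝ) * (refinedEulerian (e+1+1) (k:ℤ) (e+1-j+1) : ℝ)
          * ((1-t)^j * t^(e+1-j)) * (lam+1)^(e+1) := by ring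
  have hR : ((e+1).factorial : ℝ) * (lam + 1) ^ (e+1) * Bspline (e+1+1) ((k:ℝ) + t)
      = Qf (e+1) (k:ℤ) t * (lam + 1)^(e+1) := by
    rw [show e+1+1 = e+2 from rfl, Bspline_formula e ((k:ℝ) + t)]
    have hfacne : ((e+1).factorial : ℝ) ≠ 0 := by
      exact_mod_cast (Nat.factorial_pos (e+1)).ne'
    have hcancel : ((e+1).factorial : ℝ) * (lam + 1) ^ (e+1)
        * ((1/((e+1).factorial : ℝ)) * (∑ i ∈ Finset.range (e+3),
          (-1:ℝ)^i * ((e+2).choose i : ℝ) * max ((k:ℝ) + t - i) 0 ^ (e+1)))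
        = (∑ i ∈ Finset.range (e+3),
          (-1:ℝ)^i * ((e+2).choose i : ℝ) * max ((k:ℝ) + t - i) 0 ^ (e+1)) * (lam+1)^(e+1) := by
      field_simp
    rw [hcancel, Qf, Finset.sum_mul, Finset.sum_mul]
    apply Finset.sum_congr rfl
    intro i _
    by_cases hik : (i:ℤ) ≤ (k:ℤ)
    · rw [if_pos hik]
      have hki : (i:ℝ) ≤ (k:ℝ) := by exact_mod_cast hik
      rw [max_eq_left (by linarith)]
      have harg : (k:ℝ) + t - i = (((k:ℕ):ℤ):ℝ) - (i:ℕ) + t := by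
        push_cast
        ring
      rw [harg]
    · rw [if_neg hik]
      have hki : (k:ℝ) + 1 ≤ (i:ℝ) := by exact_mod_cast (by omega : (k:ℤ) + 1 ≤ (i:ℤ))
      rw [max_eq_right (by linarith), zero_pow (by omega : e+1 ≠ 0)]
      ring
  rw [hL, hR, PQ (e+1) (k:ℤ) t]
end

section
/- For every real y with 0 ≤ y ≤ 1, sinc(πy) ≤ 1 − y², i.e. for 0 < y ≤ 1 one has sin(πy)/(πy) ≤ 1 − y², and at y = 0 both sides equal 1. -/
open MeasureTheory Real Filter Finset

lemma sub_cube_le_sin {t : ℝ} (ht : 0 ≤ t) : t - t ^ 3 / 6 ≤ Real.sin t := by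
  have hmono : Monotone (fun t => Real.sin t - (t - t ^ 3 / 6)) := by
    apply monotone_of_deriv_nonneg
    · fun_prop
    · intro x
      have h : HasDerivAt (fun t => Real.sin t - (t - t ^ 3 / 6))
          (Real.cos x - (1 - 3 * x ^ 2 / 6)) x := by
        exact (Real.hasDerivAt_sin x).sub
          ((hasDerivAt_id x).sub (((hasDerivAt_pow 3 x)).div_const 6))
      rw [h.deriv]
      have := Real.one_sub_sq_div_two_le_cos (x := x)
      nlinarith
  have := hmono ht
  simpa using this

lemma cos_le_poly {t : ℝ} (ht : 0 ≤ t) : Real.cos t ≤ 1 - t ^ 2 / 2 + t ^ 4 / 24 := by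
  have hmono : MonotoneOn (fun t => 1 - t ^ 2 / 2 + t ^ 4 / 24 - Real.cos t) (Set.Ici 0) := by
    apply monotoneOn_of_deriv_nonneg (convex_Ici 0)
    · fun_prop
    · fun_prop
    · intro x hx
      simp only [interior_Ici, Set.mem_Ioi] at hx
      have h : HasDerivAt (fun t => 1 - t ^ 2 / 2 + t ^ 4 / 24 - Real.cos t)
          (0 - 2 * x ^ 1 / 2 + 4 * x ^ 3 / 24 - (-Real.sin x)) x := by
        exact (((hasDerivAt_const x (1:ℝ)).sub ((hasDerivAt_pow 2 x).div_const 2)).add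
          ((hasDerivAt_pow 4 x).div_const 24)).sub (Real.hasDerivAt_cos x)
      rw [h.deriv]
      have := sub_cube_le_sin hx.le
      nlinarith
  have := hmono (Set.self_mem_Ici) (Set.mem_Ici.mpr ht) ht
  simpa using this

lemma sin_le_poly {t : ℝ} (ht : 0 ≤ t) : Real.sin t ≤ t - t ^ 3 / 6 + t ^ 5 / 120 := by
  have hmono : MonotoneOn (fun t => t - t ^ 3 / 6 + t ^ 5 / 120 - Real.sin t) (Set.Ici 0) := by
    apply monotoneOn_of_deriv_nonneg (convex_Ici 0)
    · fun_prop
    · fun_prop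
    · intro x hx
      simp only [interior_Ici, Set.mem_Ioi] at hx
      have h : HasDerivAt (fun t => t - t ^ 3 / 6 + t ^ 5 / 120 - Real.sin t)
          (1 - 3 * x ^ 2 / 6 + 5 * x ^ 4 / 120 - Real.cos x) x := by
        exact (((hasDerivAt_id x).sub ((hasDerivAt_pow 3 x).div_const 6)).add
          ((hasDerivAt_pow 5 x).div_const 120)).sub (Real.hasDerivAt_sin x)
      rw [h.deriv]
      have := cos_le_poly hx.le
      nlinarith
  have := hmono (Set.self_mem_Ici) (Set.mem_Ici.mpr ht) ht
  simpa using this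

/-- `sinc t = sin t / t` for `t ≠ 0`, and `sinc 0 = 1`. -/
noncomputable def sinc (t : ℝ) : ℝ := if t = 0 then 1 else Real.sin t / t

theorem sinc_le_parabola (y : ℝ) (h0 : 0 ≤ y) (h1 : y ≤ 1) :
    _root_.sinc (π * y) ≤ 1 - y ^ 2 := by
  rcases eq_or_lt_of_le h0 with rfl | hy
  · simp [_root_.sinc]
  have hpi := Real.pi_pos
  have hπy : 0 < π * y := by positivity
  have key : Real.sin (π * y) ≤ π * y * (1 - y ^ 2) := by
    rcases le_or_gt y (2/3) with hle | hgt
    · -- Taylor bound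
      have h := sin_le_poly hπy.le
      have hπ2 : π ^ 2 < 10 := by nlinarith [Real.pi_lt_d2]
      have hπ3 : (3:ℝ) < π := Real.pi_gt_three
      have hπ4 : π ^ 4 < 100 := by nlinarith [Real.pi_pos]
      have hy2 : y ^ 2 ≤ 4 / 9 := by nlinarith
      have hA : π ^ 4 * y ^ 2 / 120 ≤ π ^ 2 / 6 - 1 := by nlinarith [mul_le_mul hπ4.le hy2 (sq_nonneg y) (by norm_num : (0:ℝ) ≤ 100)]
      have hc : 0 ≤ π * y ^ 3 * (π ^ 2 / 6 - 1 - π ^ 4 * y ^ 2 / 120) :=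
        mul_nonneg (by positivity) (by linarith)
      nlinarith [h, hc]
    · -- sin(πy) = sin(π(1-y)) ≤ π(1-y) ≤ πy(1-y)(1+y)
      have h1y : (0:ℝ) ≤ 1 - y := by linarith
      have hs : Real.sin (π * y) = Real.sin (π * (1 - y)) := by
        rw [mul_sub, mul_one, Real.sin_pi_sub]
      have hb : Real.sin (π * (1 - y)) ≤ π * (1 - y) := Real.sin_le (by positivity)
      rw [hs]
      refine hb.trans ?_
      have hq : (1:ℝ) ≤ y * (1 + y) := by nlinarith
      nlinarith [mul_nonneg (mul_nonneg hpi.le h1y) (sub_nonneg.mpr hq)]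
  rw [_root_.sinc, if_neg hπy.ne']
  rw [div_le_iff₀ hπy]
  linarith [key]
end

section
/- For every natural number k there exists a constant c > 0 such that the function G : ℝ → ℝ defined by G(x) = 𝟙_{|x|>1}(x) · c/(π² x²) + π^k · |x|^k · exp(−x²) satisfies: (a) G ∈ L^p(ℝ) for every p ∈ [1,∞), i.e. ∫_ℝ |G(x)|^p dx < ∞; and (b) for every integer d ≥ k + 2 and every real x, π^k · |x|^k · |sinc(πx/√d)|^d ≤ G(x). -/
open MeasureTheory Real Filter Finset

lemma sinc_abs (t : ℝ) : _root_.sinc |t| = _root_.sinc t := by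
  rcases le_or_gt 0 t with h | h
  · rw [abs_of_nonneg h]
  · rw [abs_of_neg h]
    unfold _root_.sinc
    rcases eq_or_ne t 0 with rfl | ht
    · simp
    · rw [if_neg (neg_ne_zero.2 ht), if_neg ht, Real.sin_neg, neg_div_neg_eq]

lemma abs_sinc_le_one (t : ℝ) : |_root_.sinc t| ≤ 1 := by
  unfold _root_.sinc
  split_ifs with h
  · simp
  · rw [abs_div, div_le_one (abs_pos.2 h)]
    exact Real.abs_sin_le_abs

lemma abs_sinc_le_inv (t : ℝ) (ht : t ≠ 0) : |_root_.sinc t| ≤ |t|⁻¹ := by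
  unfold _root_.sinc
  rw [if_neg ht, abs_div, div_le_iff₀ (abs_pos.2 ht), inv_mul_cancel₀ (abs_ne_zero.2 ht)]
  exact Real.abs_sin_le_one t

lemma cos_le_quadratic {s : ℝ} (h0 : 0 ≤ s) (h1 : s ≤ 3 / 8 * π) :
    Real.cos s ≤ 1 - 4 / π ^ 2 * s ^ 2 := by
  rcases h0.eq_or_lt with rfl | hs
  · simp
  · have hpi1 : (3.141592 : ℝ) < π := Real.pi_gt_d6
    have hpi2 : π < 3.141593 := Real.pi_lt_d6
    have h2 : s / 2 ≤ 1 := by nlinarith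
    have hsin := Real.sin_gt_sub_cube (by linarith : 0 < s / 2)
    have hcos : Real.cos s = 1 - 2 * Real.sin (s / 2) ^ 2 := by
      have := Real.cos_two_mul (s / 2)
      have h3 := Real.sin_sq_add_cos_sq (s / 2)
      rw [show 2 * (s / 2) = s by ring] at this
      nlinarith
    have hpos : 0 ≤ s / 2 - (s / 2) ^ 3 / 4 := by nlinarith [sq_nonneg (s/2), mul_nonneg h0 h0]
    have hsq : (s / 2 - (s / 2) ^ 3 / 4) ^ 2 ≤ Real.sin (s / 2) ^ 2 := by
      apply sq_le_sq' <;> nlinarith [pow_pos (half_pos hs) 3]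
    rw [hcos, div_mul_eq_mul_div, sub_le_sub_iff_left, div_le_iff₀ (by positivity : (0:ℝ) < π ^ 2)]
    have hs2 : s ^ 2 ≤ 9 * π ^ 2 / 64 := by nlinarith
    have h3 : (9.8696:ℝ) ≤ π ^ 2 := by nlinarith
    have h3' : π ^ 2 ≤ (9.8697:ℝ) := by nlinarith
    have h16 : (14.61:ℝ) ≤ 16 - s ^ 2 := by nlinarith
    have key : (4096:ℝ) ≤ 2 * π ^ 2 * (16 - s ^ 2) ^ 2 := by nlinarith
    have e2 : 4 * s ^ 2 ≤ s ^ 2 * (2 * π ^ 2 * (16 - s ^ 2) ^ 2) / 1024 := by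
      have := mul_le_mul_of_nonneg_left key (sq_nonneg s)
      linarith
    have e3 := mul_le_mul_of_nonneg_right hsq (sq_nonneg π)
    have e1 : (s / 2 - (s / 2) ^ 3 / 4) ^ 2 * π ^ 2
        = s ^ 2 * (2 * π ^ 2 * (16 - s ^ 2) ^ 2) / 2048 := by ring
    nlinarith [sq_nonneg s,
      mul_nonneg (mul_nonneg (by positivity : (0:ℝ) ≤ 2 * π ^ 2) (sq_nonneg (16 - s^2))) (sq_nonneg s)]

/-- For `u ∈ [0, 3π/4]`, `|_root_.sinc u| ≤ cos (u/2)`. -/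
lemma abs_sinc_le_cos_half {u : ℝ} (h0 : 0 ≤ u) (h1 : u ≤ 3 / 4 * π) :
    |_root_.sinc u| ≤ Real.cos (u / 2) := by
  rcases h0.eq_or_lt with rfl | hu
  · simp [_root_.sinc]
  · have hcos : 0 ≤ Real.cos (u / 2) := by
      apply Real.cos_nonneg_of_mem_Icc
      constructor <;> [linarith [Real.pi_pos]; linarith [Real.pi_pos]]
    unfold _root_.sinc
    rw [if_neg (ne_of_gt hu), abs_div, abs_of_pos hu, div_le_iff₀ hu]
    have h2 : Real.sin u = 2 * Real.sin (u / 2) * Real.cos (u / 2) := by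
      have := Real.sin_two_mul (u / 2)
      rw [show 2 * (u / 2) = u by ring] at this
      exact this
    rw [h2]
    have : |Real.sin (u / 2)| ≤ u / 2 := by
      calc |Real.sin (u/2)| ≤ |u/2| := Real.abs_sin_le_abs
        _ = u / 2 := abs_of_pos (by linarith)
    calc |2 * Real.sin (u / 2) * Real.cos (u / 2)|
        = 2 * |Real.sin (u / 2)| * Real.cos (u / 2) := by
          rw [abs_mul, abs_mul, abs_of_nonneg hcos, abs_two]
      _ ≤ 2 * (u / 2) * Real.cos (u / 2) := by
          apply mul_le_mul_of_nonneg_right _ hcos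
          linarith
      _ = Real.cos (u / 2) * u := by ring


/-- The dominating function `G` of Lemma 4.1. -/
noncomputable def Gfun (k : ℕ) (c : ℝ) (x : ℝ) : ℝ :=
  Set.indicator {y : ℝ | 1 < |y|} (fun y => c / (π ^ 2 * y ^ 2)) x +
    π ^ k * |x| ^ k * Real.exp (-x ^ 2)


lemma abs_sinc_pow_le_exp {d : ℕ} (hd : 2 ≤ d) {x : ℝ}
    (hx : |x| ≤ 3 / 4 * Real.sqrt d) :
    |_root_.sinc (π * x / Real.sqrt d)| ^ d ≤ Real.exp (-x ^ 2) := by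
  have hd0 : (0:ℝ) < d := by exact_mod_cast Nat.lt_of_lt_of_le two_pos hd
  have hD : 0 < Real.sqrt d := Real.sqrt_pos.2 hd0
  have hDsq : Real.sqrt d ^ 2 = d := Real.sq_sqrt hd0.le
  set u := π * |x| / Real.sqrt d with hu
  have hu0 : 0 ≤ u := by positivity
  have habs : |_root_.sinc (π * x / Real.sqrt d)| = |_root_.sinc u| := by
    rw [← sinc_abs (π * x / Real.sqrt d)]
    congr 1
    rw [hu, abs_div, abs_mul, abs_of_pos Real.pi_pos, abs_of_pos hD]
  have hu1 : u ≤ 3 / 4 * π := by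
    rw [hu, div_le_iff₀ hD]
    calc π * |x| ≤ π * (3 / 4 * Real.sqrt d) :=
          mul_le_mul_of_nonneg_left hx Real.pi_pos.le
      _ = 3 / 4 * π * Real.sqrt d := by ring
  have hc := abs_sinc_le_cos_half hu0 hu1
  have hq := cos_le_quadratic (by linarith : (0:ℝ) ≤ u / 2) (by linarith : u / 2 ≤ 3 / 8 * π)
  have hexp : 1 - 4 / π ^ 2 * (u / 2) ^ 2 ≤ Real.exp (-(4 / π ^ 2 * (u / 2) ^ 2)) := by
    have := Real.add_one_le_exp (-(4 / π ^ 2 * (u / 2) ^ 2))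
    linarith
  have hstep : |_root_.sinc u| ≤ Real.exp (-(4 / π ^ 2 * (u / 2) ^ 2)) :=
    le_trans hc (le_trans hq hexp)
  rw [habs]
  calc |_root_.sinc u| ^ d ≤ Real.exp (-(4 / π ^ 2 * (u / 2) ^ 2)) ^ d :=
        pow_le_pow_left₀ (abs_nonneg _) hstep d
    _ = Real.exp (d * -(4 / π ^ 2 * (u / 2) ^ 2)) := by rw [← Real.exp_nat_mul]
    _ = Real.exp (-x ^ 2) := by
        congr 1
        have e : (u / 2) ^ 2 = π ^ 2 * |x| ^ 2 / (Real.sqrt d ^ 2 * 4) := by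
          rw [hu]; ring
        rw [hDsq, sq_abs] at e
        rw [e]
        field_simp

lemma region2 (k d : ℕ) (hd : k + 2 ≤ d) {x : ℝ} (hx : 3 / 4 * Real.sqrt d < |x|) :
    π ^ k * |x| ^ k * |_root_.sinc (π * x / Real.sqrt d)| ^ d ≤
      ((Nat.factorial (k+2) : ℝ) * (2 * π) ^ (k + 2)) / (π ^ 2 * x ^ 2) := by
  have hd2 : 2 ≤ d := le_trans (by omega) hd
  have hd0 : (0:ℝ) < d := by exact_mod_cast Nat.lt_of_lt_of_le two_pos hd2
  have hD : 0 < Real.sqrt d := Real.sqrt_pos.2 hd0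
  have hDsq : Real.sqrt d ^ 2 = d := Real.sq_sqrt hd0.le
  set X := |x| with hXdef
  have hX0 : 0 < X := lt_trans (by positivity) hx
  have hr0 : (0:ℝ) < 3 / 4 * π := by positivity
  -- u = |t|
  set t := π * x / Real.sqrt d with htdef
  have ht_abs : |t| = π * X / Real.sqrt d := by
    rw [htdef, abs_div, abs_mul, abs_of_pos Real.pi_pos, abs_of_pos hD]
  have hu_gt : 3 / 4 * π < |t| := by
    rw [ht_abs, lt_div_iff₀ hD]
    calc 3 / 4 * π * Real.sqrt d = π * (3 / 4 * Real.sqrt d) := by ring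
      _ < π * X := by exact mul_lt_mul_of_pos_left hx Real.pi_pos
      _ = π * X := rfl
  have hu_pos : 0 < |t| := lt_trans hr0 hu_gt
  have ht0 : t ≠ 0 := fun h => by simp [h] at hu_pos
  have hL := abs_sinc_le_inv t ht0
  have hL0 : (0:ℝ) ≤ |_root_.sinc t| := abs_nonneg _
  have hLr : |_root_.sinc t| ≤ (3 / 4 * π)⁻¹ :=
    le_trans hL (inv_anti₀ hr0 hu_gt.le)
  set m := d - (k + 2) with hmdef
  have hm : k + 2 + m = d := by omega
  -- key constant bound : √d ^ (k+2) ≤ (k+2)! * (2π)^(k+2) * (3/4*π)^m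
  have hkey : Real.sqrt d ^ (k + 2) ≤ (Nat.factorial (k+2) : ℝ) * (2 * π) ^ (k + 2) * (3 / 4 * π) ^ m := by
    have h1 : Real.sqrt d ≤ (d:ℝ) := by
      calc Real.sqrt d ≤ Real.sqrt ((d:ℝ) ^ 2) := Real.sqrt_le_sqrt (by nlinarith [hd0, (show (1:ℝ) ≤ d by exact_mod_cast Nat.one_le_of_lt hd2)])
        _ = d := Real.sqrt_sq hd0.le
    have h2 : Real.sqrt d ^ (k + 2) ≤ (d:ℝ) ^ (k + 2) := pow_le_pow_left₀ hD.le h1 _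
    have h3 : ((d:ℝ) / 2) ^ (k + 2) / (Nat.factorial (k+2) : ℝ) ≤ Real.exp ((d:ℝ) / 2) :=
      Real.pow_div_factorial_le_exp (x := (d:ℝ)/2) (by positivity) (k + 2)
    have h4 : Real.exp ((d:ℝ) / 2) = Real.exp (1 / 2) ^ d := by
      rw [← Real.exp_nat_mul]; congr 1; ring
    have h5 : Real.exp (1 / 2) ≤ 3 / 4 * π := by
      have he : Real.exp 1 < 2.7182818286 := Real.exp_one_lt_d9
      have hpi : (3.141592:ℝ) < π := Real.pi_gt_d6
      have hsq : Real.exp (1 / 2) ^ 2 ≤ (3 / 4 * π) ^ 2 := by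
        rw [← Real.exp_nat_mul]
        norm_num
        nlinarith [Real.exp_pos (1/2)]
      exact (pow_le_pow_iff_left₀ (Real.exp_pos _).le hr0.le two_ne_zero).1 hsq
    have h6 : Real.exp (1 / 2) ^ d ≤ (3 / 4 * π) ^ d :=
      pow_le_pow_left₀ (Real.exp_pos _).le h5 d
    have h7 : ((3:ℝ) / 4 * π) ^ d = (3 / 4 * π) ^ (k + 2) * (3 / 4 * π) ^ m := by
      rw [← pow_add, hm]
    have h8 : ((3:ℝ) / 4 * π) ^ (k + 2) ≤ π ^ (k + 2) :=
      pow_le_pow_left₀ hr0.le (by nlinarith [Real.pi_pos]) _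
    have hfac : (0:ℝ) < (Nat.factorial (k+2) : ℝ) := by exact_mod_cast Nat.factorial_pos (k + 2)
    have h3' : ((d:ℝ)/2)^(k+2) ≤ (Nat.factorial (k+2) : ℝ) * Real.exp ((d:ℝ)/2) := by
      rw [div_le_iff₀ hfac] at h3
      linarith
    have h67 : Real.exp ((d:ℝ)/2) ≤ (3/4*π)^(k+2) * (3/4*π)^m := by
      rw [← h7]
      rw [← h4] at h6
      exact h6
    calc Real.sqrt d ^ (k+2) ≤ (d:ℝ)^(k+2) := h2
      _ = ((d:ℝ)/2)^(k+2) * 2^(k+2) := by rw [div_pow]; field_simp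
      _ ≤ ((Nat.factorial (k+2) : ℝ) * Real.exp ((d:ℝ)/2)) * 2^(k+2) := by gcongr
      _ = (Nat.factorial (k+2) : ℝ) * 2^(k+2) * Real.exp ((d:ℝ)/2) := by ring
      _ ≤ (Nat.factorial (k+2) : ℝ) * 2^(k+2) * ((3/4*π)^(k+2) * (3/4*π)^m) := by gcongr
      _ ≤ (Nat.factorial (k+2) : ℝ) * 2^(k+2) * (π^(k+2) * (3/4*π)^m) := by
          gcongr
      _ = (Nat.factorial (k+2) : ℝ) * (2*π)^(k+2) * (3/4*π)^m := by rw [mul_pow]; ring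
  have hx2 : x ^ 2 = X ^ 2 := (sq_abs x).symm
  have hLu : |_root_.sinc t| ≤ (π * X / Real.sqrt d)⁻¹ := ht_abs ▸ hL
  have hne : (π * X / Real.sqrt d) ≠ 0 := by positivity
  calc π ^ k * X ^ k * |_root_.sinc t| ^ d
      = π ^ k * X ^ k * (|_root_.sinc t| ^ (k+2) * |_root_.sinc t| ^ m) := by rw [← pow_add, hm]
    _ ≤ π ^ k * X ^ k * ((π * X / Real.sqrt d)⁻¹ ^ (k+2) * ((3/4*π)⁻¹) ^ m) := by
        gcongr
    _ = (Real.sqrt d ^ (k+2) * ((3/4*π)⁻¹)^m) / (π^2 * X^2) := by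
        rw [inv_div, div_pow, mul_pow, pow_add, pow_add, pow_add]
        field_simp
    _ ≤ ((Nat.factorial (k+2) : ℝ) * (2*π)^(k+2)) / (π^2 * X^2) := by
        have hnum : Real.sqrt d ^ (k+2) * ((3/4*π)⁻¹)^m
            ≤ (Nat.factorial (k+2) : ℝ) * (2*π)^(k+2) := by
          rw [inv_pow, mul_inv_le_iff₀ (pow_pos hr0 m)]
          exact hkey
        exact div_le_div_of_nonneg_right hnum (by positivity)
    _ = ((Nat.factorial (k+2) : ℝ) * (2*π)^(k+2)) / (π^2 * x^2) := by rw [hx2]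


lemma Gfun_nonneg (k : ℕ) {c : ℝ} (hc : 0 ≤ c) (x : ℝ) : 0 ≤ Gfun k c x := by
  unfold Gfun
  have h1 : 0 ≤ Set.indicator {y : ℝ | 1 < |y|} (fun y => c / (π ^ 2 * y ^ 2)) x :=
    Set.indicator_nonneg (fun y _ => by positivity) x
  positivity

lemma Gfun_le (k : ℕ) {c : ℝ} (hc : 0 ≤ c) (x : ℝ) :
    Gfun k c x ≤ 2 * (c / π ^ 2 + π ^ k * (Nat.factorial (k + 2) : ℝ)) * (1 + x ^ 2)⁻¹ := by
  obtain ⟨L, hL⟩ : ∃ L : ℝ, L = c / π ^ 2 + π ^ k * (Nat.factorial (k + 2) : ℝ) := ⟨_, rfl⟩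
  rw [← hL]
  have hfac1 : (1:ℝ) ≤ (Nat.factorial (k + 2) : ℝ) := by
    exact_mod_cast Nat.one_le_iff_ne_zero.2 (Nat.factorial_ne_zero _)
  have hpik : (0:ℝ) < π ^ k := pow_pos Real.pi_pos k
  have hcpi : (0:ℝ) ≤ c / π ^ 2 := by positivity
  have hLk : π ^ k ≤ L := by rw [hL]; nlinarith [mul_le_mul_of_nonneg_left hfac1 hpik.le]
  have hLpos : 0 < L := lt_of_lt_of_le hpik hLk
  have hden : (0:ℝ) < 1 + x ^ 2 := by positivity
  have h2L : 2 * L * (1 + x ^ 2)⁻¹ = 2 * L / (1 + x ^ 2) := by ring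
  unfold Gfun
  rcases le_or_gt |x| 1 with h1 | h1
  · rw [Set.indicator_of_notMem (by simpa using h1.not_gt)]
    have hb : π ^ k * |x| ^ k * Real.exp (-x ^ 2) ≤ π ^ k := by
      calc π ^ k * |x| ^ k * Real.exp (-x ^ 2) ≤ π ^ k * 1 * 1 := by
            apply mul_le_mul (mul_le_mul le_rfl (pow_le_one₀ (abs_nonneg x) h1)
              (by positivity) (by positivity))
              (Real.exp_le_one_iff.2 (by nlinarith [sq_nonneg x]))
              (Real.exp_pos _).le (by positivity)
        _ = π ^ k := by ring
    have h2 : (1:ℝ) + x ^ 2 ≤ 2 := by nlinarith [sq_abs x, abs_nonneg x]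
    have h3 : L ≤ 2 * L / (1 + x ^ 2) := by
      rw [le_div_iff₀ hden]
      nlinarith [mul_le_mul_of_nonneg_left h2 hLpos.le]
    rw [h2L]
    linarith
  · rw [Set.indicator_of_mem (by simpa using h1)]
    have hx2 : (1:ℝ) ≤ x ^ 2 := by nlinarith [sq_abs x]
    have hx0 : (0:ℝ) < x ^ 2 := by linarith
    have hind : c / (π ^ 2 * x ^ 2) = (c / π ^ 2) / x ^ 2 := by
      rw [div_div]
    have hterm : π ^ k * |x| ^ k * Real.exp (-x ^ 2)
        ≤ π ^ k * (Nat.factorial (k + 2) : ℝ) / x ^ 2 := by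
      rw [le_div_iff₀ hx0]
      have e1 : π ^ k * |x| ^ k * Real.exp (-x ^ 2) * x ^ 2
          = π ^ k * |x| ^ (k + 2) * Real.exp (-x ^ 2) := by
        rw [pow_add, ← sq_abs x]; ring
      rw [e1]
      have ha : |x| ^ (k + 2) ≤ (x ^ 2) ^ (k + 2) :=
        pow_le_pow_left₀ (abs_nonneg x) (by nlinarith [sq_abs x]) _
      have hb : (x ^ 2) ^ (k + 2) ≤ (Nat.factorial (k + 2) : ℝ) * Real.exp (x ^ 2) := by
        have := Real.pow_div_factorial_le_exp (x := x ^ 2) (by positivity) (k + 2)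
        rw [div_le_iff₀ (by exact_mod_cast Nat.factorial_pos (k + 2) : (0:ℝ) < (Nat.factorial (k+2) : ℝ))] at this
        linarith
      calc π ^ k * |x| ^ (k + 2) * Real.exp (-x ^ 2)
          ≤ π ^ k * ((Nat.factorial (k + 2) : ℝ) * Real.exp (x ^ 2)) * Real.exp (-x ^ 2) := by
            gcongr
            exact le_trans ha hb
        _ = π ^ k * (Nat.factorial (k + 2) : ℝ) * (Real.exp (x ^ 2) * Real.exp (-x ^ 2)) := by ring
        _ = π ^ k * (Nat.factorial (k + 2) : ℝ) := by
            rw [← Real.exp_add]; simp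
    have hsum : c / (π ^ 2 * x ^ 2) + π ^ k * |x| ^ k * Real.exp (-x ^ 2) ≤ L / x ^ 2 := by
      rw [hind, hL]
      have : (c / π ^ 2 + π ^ k * (Nat.factorial (k + 2) : ℝ)) / x ^ 2
          = c / π ^ 2 / x ^ 2 + π ^ k * (Nat.factorial (k + 2) : ℝ) / x ^ 2 := by ring
      rw [this]
      linarith
    have hlast : L / x ^ 2 ≤ 2 * L / (1 + x ^ 2) := by
      rw [div_le_div_iff₀ hx0 hden]
      nlinarith [mul_le_mul_of_nonneg_left (show (1:ℝ) + x ^ 2 ≤ 2 * x ^ 2 by linarith) hLpos.le]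
    rw [h2L]
    linarith


theorem sinc_pow_dominated (k : ℕ) :
    ∃ c : ℝ, 0 < c ∧
      (∀ p : ℝ, 1 ≤ p → ∫⁻ x : ℝ, ENNReal.ofReal (|Gfun k c x| ^ p) < ⊤) ∧
      (∀ d : ℕ, k + 2 ≤ d → ∀ x : ℝ,
        π ^ k * |x| ^ k * |_root_.sinc (π * x / Real.sqrt d)| ^ d ≤ Gfun k c x) := by
  have hfacpos : (0:ℝ) < (Nat.factorial (k + 2) : ℝ) := by
    exact_mod_cast Nat.factorial_pos (k + 2)
  refine ⟨(Nat.factorial (k + 2) : ℝ) * (2 * π) ^ (k + 2), by positivity, ?_, ?_⟩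
  · -- integrability
    intro p hp
    have hc0 : (0:ℝ) ≤ (Nat.factorial (k + 2) : ℝ) * (2 * π) ^ (k + 2) := by positivity
    obtain ⟨B, hB⟩ : ∃ B : ℝ, B = 2 * ((Nat.factorial (k + 2) : ℝ) * (2 * π) ^ (k + 2) / π ^ 2
        + π ^ k * (Nat.factorial (k + 2) : ℝ)) := ⟨_, rfl⟩
    have hB0 : 0 < B := by rw [hB]; positivity
    have key : ∀ x : ℝ, |Gfun k ((Nat.factorial (k + 2) : ℝ) * (2 * π) ^ (k + 2)) x| ^ p
        ≤ B ^ p * (1 + x ^ 2)⁻¹ := by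
      intro x
      have hG0 := Gfun_nonneg k hc0 x
      have hGle := Gfun_le k hc0 x
      rw [← hB] at hGle
      rw [abs_of_nonneg hG0]
      have hden : (0:ℝ) < 1 + x ^ 2 := by positivity
      have hinv0 : (0:ℝ) < (1 + x ^ 2)⁻¹ := by positivity
      have hinv1 : (1 + x ^ 2)⁻¹ ≤ 1 := by
        rw [inv_le_one_iff₀]; right; nlinarith [sq_nonneg x]
      calc Gfun k ((Nat.factorial (k + 2) : ℝ) * (2 * π) ^ (k + 2)) x ^ p
          ≤ (B * (1 + x ^ 2)⁻¹) ^ p := Real.rpow_le_rpow hG0 hGle (by linarith)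
        _ = B ^ p * ((1 + x ^ 2)⁻¹) ^ p := Real.mul_rpow hB0.le hinv0.le
        _ ≤ B ^ p * ((1 + x ^ 2)⁻¹) ^ (1:ℝ) := by
            apply mul_le_mul_of_nonneg_left
              (Real.rpow_le_rpow_of_exponent_ge hinv0 hinv1 hp)
              (Real.rpow_nonneg hB0.le p)
        _ = B ^ p * (1 + x ^ 2)⁻¹ := by rw [Real.rpow_one]
    calc ∫⁻ x : ℝ, ENNReal.ofReal (|Gfun k ((Nat.factorial (k + 2) : ℝ) * (2 * π) ^ (k + 2)) x| ^ p)
        ≤ ∫⁻ x : ℝ, ENNReal.ofReal (B ^ p * (1 + x ^ 2)⁻¹) :=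
          lintegral_mono fun x => ENNReal.ofReal_le_ofReal (key x)
      _ < ⊤ := (integrable_inv_one_add_sq.const_mul (B ^ p)).lintegral_lt_top
  · -- domination
    intro d hd x
    have hd2 : 2 ≤ d := le_trans (by omega) hd
    rcases le_or_gt |x| (3 / 4 * Real.sqrt d) with hx | hx
    · have h := abs_sinc_pow_le_exp hd2 hx
      unfold Gfun
      have hind : 0 ≤ Set.indicator {y : ℝ | 1 < |y|}
          (fun y => (Nat.factorial (k + 2) : ℝ) * (2 * π) ^ (k + 2) / (π ^ 2 * y ^ 2)) x :=
        Set.indicator_nonneg (fun y _ => by positivity) x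
      have h2 : π ^ k * |x| ^ k * |_root_.sinc (π * x / Real.sqrt d)| ^ d
          ≤ π ^ k * |x| ^ k * Real.exp (-x ^ 2) :=
        mul_le_mul_of_nonneg_left h (by positivity)
      linarith
    · have h := region2 k d hd hx
      have hd0 : (0:ℝ) < d := by exact_mod_cast Nat.lt_of_lt_of_le two_pos hd2
      have hs2 : Real.sqrt 2 ≤ Real.sqrt d := Real.sqrt_le_sqrt (by exact_mod_cast hd2)
      have h42 : (4:ℝ) / 3 < Real.sqrt 2 := by
        rw [show (2:ℝ) = ((2:ℕ):ℝ) by norm_num] at *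
        exact (Real.lt_sqrt (by norm_num)).2 (by norm_num)
      have h1x : 1 < |x| := by linarith
      unfold Gfun
      rw [Set.indicator_of_mem (by simpa using h1x)]
      have hpos : 0 ≤ π ^ k * |x| ^ k * Real.exp (-x ^ 2) := by positivity
      linarith
end

section
/- There exists a constant C > 0 such that for every integer d ≥ 1 and every real x with 0 ≤ x ≤ 1: |sinc((x/2)·√(12/d))^d − exp(−x²/2)| ≤ C/d. -/
open MeasureTheory Real Filter Finset

private lemma nonneg_of_deriv (f f' : ℝ → ℝ) (h0 : f 0 = 0)
    (hd : ∀ x, HasDerivAt f (f' x) x) (hf' : ∀ x, 0 ≤ x → 0 ≤ f' x) :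
    ∀ t, 0 ≤ t → 0 ≤ f t := by
  intro t ht
  have hmono : MonotoneOn f (Set.Ici (0:ℝ)) := by
    apply monotoneOn_of_deriv_nonneg (convex_Ici 0)
    · exact fun x _ => (hd x).differentiableAt.continuousAt.continuousWithinAt
    · exact fun x _ => (hd x).differentiableAt.differentiableWithinAt
    · intro x hx
      rw [(hd x).deriv]
      exact hf' x (le_of_lt (by simpa using hx))
  have := hmono Set.self_mem_Ici (Set.mem_Ici.mpr ht) ht
  simpa [h0] using this

private lemma sin_ge_cubic (t : ℝ) (ht : 0 ≤ t) : t - t ^ 3 / 6 ≤ Real.sin t := by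
  have key := nonneg_of_deriv (fun x => Real.sin x - x + x ^ 3 / 6)
    (fun x => Real.cos x - 1 + 3 * x ^ 2 / 6) (by simp)
    (fun x => ((Real.hasDerivAt_sin x).sub (hasDerivAt_id x)).add
      ((hasDerivAt_pow 3 x).div_const 6)) ?_ t ht
  · linarith [key]
  · intro x _
    have := Real.one_sub_sq_div_two_le_cos (x := x)
    nlinarith

private lemma cos_le_quartic (t : ℝ) (ht : 0 ≤ t) :
    Real.cos t ≤ 1 - t ^ 2 / 2 + t ^ 4 / 24 := by
  have key := nonneg_of_deriv (fun x => 1 - x ^ 2 / 2 + x ^ 4 / 24 - Real.cos x)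
    (fun x => -(2 * x ^ 1 / 2) + 4 * x ^ 3 / 24 - (-Real.sin x)) (by simp)
    (fun x => ((((hasDerivAt_pow 2 x).div_const 2).const_sub 1).add
      ((hasDerivAt_pow 4 x).div_const 24)).sub (Real.hasDerivAt_cos x)) ?_ t ht
  · linarith [key]
  · intro x hx
    have := sin_ge_cubic x hx
    nlinarith

private lemma sin_le_quintic (t : ℝ) (ht : 0 ≤ t) :
    Real.sin t ≤ t - t ^ 3 / 6 + t ^ 5 / 120 := by
  have key := nonneg_of_deriv (fun x => x - x ^ 3 / 6 + x ^ 5 / 120 - Real.sin x)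
    (fun x => (1 - 3 * x ^ 2 / 6 + 5 * x ^ 4 / 120) - Real.cos x) (by simp)
    (fun x => (((hasDerivAt_id x).sub ((hasDerivAt_pow 3 x).div_const 6)).add
      ((hasDerivAt_pow 5 x).div_const 120)).sub (Real.hasDerivAt_sin x)) ?_ t ht
  · linarith [key]
  · intro x hx
    have := cos_le_quartic x hx
    nlinarith

private lemma sinc_bounds (t : ℝ) (ht : 0 ≤ t) :
    1 - t ^ 2 / 6 ≤ _root_.sinc t ∧ _root_.sinc t ≤ 1 - t ^ 2 / 6 + t ^ 4 / 120 := by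
  rcases eq_or_lt_of_le ht with h | h
  · simp [_root_.sinc, ← h]
  · have h1 := sin_ge_cubic t ht
    have h2 := sin_le_quintic t ht
    rw [_root_.sinc, if_neg h.ne']
    constructor
    · rw [le_div_iff₀ h]; nlinarith
    · rw [div_le_iff₀ h]; nlinarith

private lemma exp_neg_bounds (s : ℝ) (hs : 0 ≤ s) :
    1 - s ≤ Real.exp (-s) ∧ Real.exp (-s) ≤ 1 - s + s ^ 2 := by
  constructor
  · linarith [Real.add_one_le_exp (-s)]
  · have h1 : Real.exp (-s) ≤ (1 + s)⁻¹ := by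
      rw [Real.exp_neg]
      apply inv_anti₀ (by linarith)
      linarith [Real.add_one_le_exp s]
    have h2 : (1 + s)⁻¹ ≤ 1 - s + s ^ 2 := by
      rw [inv_le_iff_one_le_mul₀ (by linarith)]
      nlinarith
    linarith

private lemma pow_sub_pow_abs_le (a b : ℝ) (ha : 0 ≤ a) (ha1 : a ≤ 1)
    (hb : 0 ≤ b) (hb1 : b ≤ 1) : ∀ n : ℕ, |a ^ n - b ^ n| ≤ n * |a - b| := by
  intro n
  induction n with
  | zero => simp
  | succ n ih =>
    have h : a ^ (n + 1) - b ^ (n + 1) = a ^ n * (a - b) + b * (a ^ n - b ^ n) := by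
      ring
    calc |a ^ (n + 1) - b ^ (n + 1)|
        ≤ |a ^ n * (a - b)| + |b * (a ^ n - b ^ n)| := by rw [h]; exact abs_add_le _ _
      _ = a ^ n * |a - b| + b * |a ^ n - b ^ n| := by
          rw [abs_mul, abs_mul, abs_of_nonneg (pow_nonneg ha n), abs_of_nonneg hb]
      _ ≤ 1 * |a - b| + 1 * (n * |a - b|) := by
          gcongr
          · exact pow_le_one₀ ha ha1
      _ = (n + 1 : ℕ) * |a - b| := by push_cast; ring

set_option maxHeartbeats 1000000 in
theorem sinc_pow_gaussian_rate :
    ∃ C : ℝ, 0 < C ∧ ∀ d : ℕ, 1 ≤ d → ∀ x : ℝ, 0 ≤ x → x ≤ 1 →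
      |_root_.sinc ((x / 2) * Real.sqrt (12 / (d : ℝ))) ^ d - Real.exp (-(x ^ 2) / 2)| ≤
        C / d := by
  refine ⟨1, one_pos, fun d hd x hx hx1 => ?_⟩
  have hd0 : (0 : ℝ) < d := by exact_mod_cast hd
  set t : ℝ := (x / 2) * Real.sqrt (12 / (d : ℝ)) with ht_def
  have ht : 0 ≤ t := by positivity
  have ht2 : t ^ 2 = 3 * x ^ 2 / d := by
    rw [ht_def, mul_pow, Real.sq_sqrt (by positivity)]
    ring
  have ht2le : t ^ 2 ≤ 3 / d := by
    rw [ht2]; gcongr; nlinarith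
  have hd1 : (1:ℝ) ≤ d := by exact_mod_cast hd
  have ht2le3 : t ^ 2 ≤ 3 := le_trans ht2le (by
    rw [div_le_iff₀ hd0]; nlinarith)
  -- a = sinc t, c = exp (-(x^2/(2d)))
  set a : ℝ := _root_.sinc t with ha_def
  set c : ℝ := Real.exp (-(x ^ 2 / (2 * d))) with hc_def
  obtain ⟨hal, hau⟩ := sinc_bounds t ht
  obtain ⟨hcl, hcu⟩ := exp_neg_bounds (x ^ 2 / (2 * d)) (by positivity)
  have hs_eq : t ^ 2 / 6 = x ^ 2 / (2 * d) := by rw [ht2]; ring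
  have ha0 : 0 ≤ a := by nlinarith
  have ha1 : a ≤ 1 := by nlinarith
  have hc0 : 0 ≤ c := Real.exp_nonneg _
  have hc1 : c ≤ 1 := Real.exp_le_one_iff.mpr (neg_nonpos.mpr (by positivity))
  have hac : |a - c| ≤ x ^ 4 / (4 * d ^ 2) := by
    rw [abs_le]
    have ht4 : t ^ 4 = 9 * x ^ 4 / d ^ 2 := by
      have : t ^ 4 = (t ^ 2) ^ 2 := by ring
      rw [this, ht2]; ring
    constructor
    · have : c ≤ 1 - t ^ 2 / 6 + (x ^ 2 / (2 * d)) ^ 2 := by rw [hs_eq]; exact hcu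
      have hsq : (x ^ 2 / (2 * d)) ^ 2 = x ^ 4 / (4 * d ^ 2) := by ring
      nlinarith
    · have : 1 - t ^ 2 / 6 ≤ c := by rw [hs_eq]; exact hcl
      have hx4 : t ^ 4 / 120 ≤ x ^ 4 / (4 * d ^ 2) := by
        rw [ht4, div_div, div_le_div_iff₀ (by positivity) (by positivity)]
        nlinarith [mul_nonneg (pow_nonneg hx 4) (pow_pos hd0 2).le]
      nlinarith
  have hexp : Real.exp (-(x ^ 2) / 2) = c ^ d := by
    rw [hc_def, ← Real.exp_nat_mul]
    congr 1
    field_simp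
  rw [hexp]
  calc |a ^ d - c ^ d| ≤ d * |a - c| := pow_sub_pow_abs_le a c ha0 ha1 hc0 hc1 d
    _ ≤ d * (x ^ 4 / (4 * d ^ 2)) := by gcongr
    _ = x ^ 4 / (4 * d) := by field_simp
    _ ≤ 1 / d := by
        rw [div_le_div_iff₀ (by positivity) hd0]
        have hx4 : x ^ 4 ≤ 1 := pow_le_one₀ hx hx1
        nlinarith
end

section
/- For all integers d ≥ 1, 1 ≤ j ≤ d and 1 ≤ k ≤ d−1, the refined Eulerian number satisfies 𝐀_{d,k,j} = Σ_{i=0}^{k} C(d,i) · (−1)^i · (k−i)^{d−j} · (k−i+1)^{j−1}. -/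
open MeasureTheory Real Filter Finset

namespace RefinedAux

open Equiv Fin


/-- insertion of value `j` at the last position -/
def ins {n : ℕ} (j : Fin (n+1)) (τ : Equiv.Perm (Fin n)) : Equiv.Perm (Fin (n+1)) :=
  (finSuccEquiv' (Fin.last n)).trans ((Equiv.optionCongr τ).trans (finSuccEquiv' j).symm)

@[simp] lemma ins_last {n : ℕ} (j : Fin (n+1)) (τ : Equiv.Perm (Fin n)) :
    ins j τ (Fin.last n) = j := by
  simp [ins]

@[simp] lemma ins_castSucc {n : ℕ} (j : Fin (n+1)) (τ : Equiv.Perm (Fin n)) (i : Fin n) :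
    ins j τ (Fin.castSucc i) = j.succAbove (τ i) := by
  simp [ins, ← Fin.succAbove_last]

/-- removal of the last position -/
def rem {n : ℕ} (j : Fin (n+1)) (σ : Equiv.Perm (Fin (n+1))) : Equiv.Perm (Fin n) :=
  Equiv.removeNone (((finSuccEquiv' (Fin.last n)).symm.trans σ).trans (finSuccEquiv' j))

lemma rem_apply {n : ℕ} (j : Fin (n+1)) (σ : Equiv.Perm (Fin (n+1)))
    (hσ : σ (Fin.last n) = j) (i : Fin n) :
    j.succAbove (rem j σ i) = σ (Fin.castSucc i) := by
  set g : Option (Fin n) ≃ Option (Fin n) :=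
    ((finSuccEquiv' (Fin.last n)).symm.trans σ).trans (finSuccEquiv' j) with hg
  have hgi : g (some i) = finSuccEquiv' j (σ (Fin.castSucc i)) := by
    simp [hg, ← Fin.succAbove_last]
  have hne : σ (Fin.castSucc i) ≠ j := fun h =>
    (Fin.castSucc_lt_last i).ne (σ.injective (h.trans hσ.symm))
  obtain ⟨y, hy⟩ : ∃ y, g (some i) = some y := by
    rw [hgi]
    rcases h : finSuccEquiv' j (σ (Fin.castSucc i)) with _ | y
    · exfalso
      apply hne
      have := congrArg (finSuccEquiv' j).symm h
      simpa using this
    · exact ⟨y, rfl⟩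
  have h1 : some (Equiv.removeNone g i) = g (some i) := Equiv.removeNone_some g ⟨y, hy⟩
  rw [hgi] at h1
  have := congrArg (finSuccEquiv' j).symm h1
  simpa [rem, ← hg] using this

lemma ins_rem {n : ℕ} (j : Fin (n+1)) (σ : Equiv.Perm (Fin (n+1)))
    (hσ : σ (Fin.last n) = j) : ins j (rem j σ) = σ := by
  apply Equiv.ext
  intro x
  induction x using Fin.lastCases with
  | last => simp [hσ]
  | cast i => rw [ins_castSucc, rem_apply j σ hσ]

lemma rem_ins {n : ℕ} (j : Fin (n+1)) (τ : Equiv.Perm (Fin n)) :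
    rem j (ins j τ) = τ := by
  apply Equiv.ext
  intro i
  have h := rem_apply j (ins j τ) (ins_last j τ) i
  rw [ins_castSucc] at h
  exact (Fin.succAbove_right_injective (p := j)) h

lemma card_filter_ins {n : ℕ} (jf : Fin (n+1)) (p : Equiv.Perm (Fin (n+1)) → Prop)
    [DecidablePred p] :
    (Finset.univ.filter fun σ => p σ ∧ σ (Fin.last n) = jf).card
      = (Finset.univ.filter fun τ : Equiv.Perm (Fin n) => p (ins jf τ)).card := by
  apply Finset.card_bij' (fun σ _ => rem jf σ) (fun τ _ => ins jf τ)
  · intro σ hσ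
    simp only [Finset.mem_filter, Finset.mem_univ, true_and] at hσ ⊢
    rw [ins_rem jf σ hσ.2]
    exact hσ.1
  · intro τ hτ
    simp only [Finset.mem_filter, Finset.mem_univ, true_and] at hτ ⊢
    exact ⟨hτ, ins_last jf τ⟩
  · intro σ hσ
    simp only [Finset.mem_filter, Finset.mem_univ, true_and] at hσ
    exact ins_rem jf σ hσ.2
  · intro τ _
    exact rem_ins jf τ


def dset {n : ℕ} (σ : Equiv.Perm (Fin (n+1))) : Finset ℕ :=
  (Finset.range n).filter fun i =>
    σ ⟨(i + 1) % (n+1), Nat.mod_lt _ n.succ_pos⟩ < σ ⟨i % (n+1), Nat.mod_lt _ n.succ_pos⟩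

lemma numDescents_eq_dset {n : ℕ} (σ : Equiv.Perm (Fin (n+1))) :
    numDescents σ = (dset σ).card := by
  unfold numDescents dset
  refine Finset.card_bij (fun i _ => (i : ℕ)) ?_ ?_ ?_
  · intro i hi
    simp only [Finset.mem_filter, Finset.mem_univ, true_and] at hi ⊢
    obtain ⟨h1, h2⟩ := hi
    refine ⟨Finset.mem_range.mpr (by omega), ?_⟩
    have he : (⟨(i : ℕ) % (n+1), Nat.mod_lt _ n.succ_pos⟩ : Fin (n+1)) = i :=
      Fin.ext (Nat.mod_eq_of_lt i.isLt)
    rw [he]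
    exact h2
  · intro a ha b hb hab
    exact Fin.ext hab
  · intro b hb
    simp only [Finset.mem_filter, Finset.mem_range] at hb
    obtain ⟨h1, h2⟩ := hb
    refine ⟨⟨b, by omega⟩, ?_, rfl⟩
    simp only [Finset.mem_filter, Finset.mem_univ, true_and]
    refine ⟨by omega, ?_⟩
    have he : (⟨b % (n+1), Nat.mod_lt _ n.succ_pos⟩ : Fin (n+1)) = ⟨b, by omega⟩ :=
      Fin.ext (Nat.mod_eq_of_lt (by omega))
    rw [he] at h2
    exact h2


lemma numDescents_ins {m : ℕ} (j : Fin (m+2)) (τ : Equiv.Perm (Fin (m+1))) :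
    numDescents (ins j τ) = numDescents τ
      + if (j : ℕ) ≤ (τ (Fin.last m) : ℕ) then 1 else 0 := by
  rw [numDescents_eq_dset, numDescents_eq_dset]
  unfold dset
  have key : ∀ (i : ℕ) (h : i < m + 1),
      (⟨i % (m+2), Nat.mod_lt _ (m+1).succ_pos⟩ : Fin (m+2))
        = Fin.castSucc ⟨i % (m+1), Nat.mod_lt _ m.succ_pos⟩ := by
    intro i h
    apply Fin.ext
    simp [Nat.mod_eq_of_lt, Nat.mod_eq_of_lt h, Nat.mod_eq_of_lt (by omega : i < m + 2)]
  have hlast : (⟨(m+1) % (m+2), Nat.mod_lt _ (m+1).succ_pos⟩ : Fin (m+2)) = Fin.last (m+1) :=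
    Fin.ext (Nat.mod_eq_of_lt (by omega))
  have hcond : ∀ i, i < m →
      ((ins j τ ⟨(i + 1) % (m+2), Nat.mod_lt _ (m+1).succ_pos⟩
        < ins j τ ⟨i % (m+2), Nat.mod_lt _ (m+1).succ_pos⟩)
      ↔ (τ ⟨(i + 1) % (m+1), Nat.mod_lt _ m.succ_pos⟩
        < τ ⟨i % (m+1), Nat.mod_lt _ m.succ_pos⟩)) := by
    intro i hi
    rw [key (i+1) (by omega), key i (by omega), ins_castSucc, ins_castSucc,
      Fin.succAbove_lt_succAbove_iff]
  have hm_cond :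
      ((ins j τ ⟨(m + 1) % (m+2), Nat.mod_lt _ (m+1).succ_pos⟩
        < ins j τ ⟨m % (m+2), Nat.mod_lt _ (m+1).succ_pos⟩)
      ↔ (j : ℕ) ≤ (τ (Fin.last m) : ℕ)) := by
    rw [hlast, key m (by omega), ins_last, ins_castSucc]
    have : (⟨m % (m+1), Nat.mod_lt _ m.succ_pos⟩ : Fin (m+1)) = Fin.last m :=
      Fin.ext (Nat.mod_eq_of_lt (by omega))
    rw [this, Fin.lt_succAbove_iff_le_castSucc]
    simp [Fin.le_def]
  rw [Finset.range_add_one, Finset.filter_insert]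
  have hfc : Finset.filter (fun i =>
      ins j τ ⟨(i + 1) % (m+2), Nat.mod_lt _ (m+1).succ_pos⟩
        < ins j τ ⟨i % (m+2), Nat.mod_lt _ (m+1).succ_pos⟩) (Finset.range m)
      = Finset.filter (fun i =>
      τ ⟨(i + 1) % (m+1), Nat.mod_lt _ m.succ_pos⟩
        < τ ⟨i % (m+1), Nat.mod_lt _ m.succ_pos⟩) (Finset.range m) := by
    apply Finset.filter_congr
    intro i hi
    simpa using hcond i (Finset.mem_range.mp hi)
  split
  · rename_i h
    rw [Finset.card_insert_of_notMem (by simp), hfc]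
    rw [if_pos (hm_cond.mp h)]
  · rename_i h
    rw [hfc, if_neg (fun hc => h (hm_cond.mpr hc)), add_zero]

def A (d k j : ℕ) : ℕ :=
  if h : 0 < d then
    (Finset.univ.filter fun σ : Equiv.Perm (Fin d) =>
      numDescents σ = k ∧ ((σ ⟨d - 1, Nat.sub_lt h Nat.one_pos⟩ : ℕ) + 1 = j)).card
  else 0

lemma refinedEulerian_eq_A (d k j : ℕ) : refinedEulerian d (k : ℤ) j = A d k j := by
  unfold refinedEulerian A
  split
  · congr 1
    apply Finset.filter_congr
    intro σ _
    simp [Nat.cast_inj]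
  · rfl

lemma A_def' (n k j : ℕ) : A (n+1) k j =
    (Finset.univ.filter fun σ : Equiv.Perm (Fin (n+1)) =>
      numDescents σ = k ∧ ((σ (Fin.last n) : ℕ) + 1 = j)).card := by
  simp only [A, dif_pos (Nat.succ_pos n)]
  rfl

lemma A_one (k j : ℕ) : A 1 k j = if k = 0 ∧ j = 1 then 1 else 0 := by
  rw [A_def' 0]
  have h1 : (Finset.univ : Finset (Equiv.Perm (Fin 1))) = {1} :=
    Finset.eq_singleton_iff_unique_mem.mpr
      ⟨Finset.mem_univ _, fun σ _ => Equiv.ext fun x => Subsingleton.elim _ _⟩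
  rw [h1, Finset.filter_singleton]
  have h2 : numDescents (1 : Equiv.Perm (Fin 1)) = 0 := by decide
  have h3 : ((1 : Equiv.Perm (Fin 1)) (Fin.last 0) : ℕ) = 0 := rfl
  rw [h2, h3]
  by_cases hk : k = 0 <;> by_cases hj : j = 1 <;> simp [hk, hj] <;> omega


lemma A_rec (m k j : ℕ) (hj1 : 1 ≤ j) (hj2 : j ≤ m + 2) :
    A (m+2) k j = (∑ j' ∈ Finset.Icc 1 (j-1), A (m+1) k j')
      + (if 1 ≤ k then ∑ j' ∈ Finset.Icc j (m+1), A (m+1) (k-1) j' else 0) := by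
  classical
  set jf : Fin (m+2) := ⟨j - 1, by omega⟩ with hjf
  have step1 : A (m+2) k j =
      (Finset.univ.filter fun σ : Equiv.Perm (Fin (m+2)) =>
        numDescents σ = k ∧ σ (Fin.last (m+1)) = jf).card := by
    rw [A_def']
    congr 1
    apply Finset.filter_congr
    intro σ _
    have : ((σ (Fin.last (m+1)) : ℕ) + 1 = j) ↔ σ (Fin.last (m+1)) = jf := by
      rw [Fin.ext_iff]
      constructor <;> intro h <;> simp [hjf] at * <;> omega
    simp [this]
  rw [step1, card_filter_ins jf (fun σ => numDescents σ = k)]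
  -- now split the τ count
  rw [← Finset.card_filter_add_card_filter_not
    (p := fun τ : Equiv.Perm (Fin (m+1)) => j ≤ (τ (Fin.last m) : ℕ) + 1)]
  rw [add_comm]
  congr 1
  · -- ¬(j ≤ τlast+1) part : descents stay k
    have hset : (Finset.univ.filter fun τ : Equiv.Perm (Fin (m+1)) =>
          numDescents (ins jf τ) = k).filter
          (fun τ => ¬ (j ≤ (τ (Fin.last m) : ℕ) + 1))
        = Finset.univ.filter (fun τ : Equiv.Perm (Fin (m+1)) =>
          numDescents τ = k ∧ (τ (Fin.last m) : ℕ) + 1 ≤ j - 1) := by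
      rw [Finset.filter_filter]
      apply Finset.filter_congr
      intro τ _
      try simp only [Finset.mem_univ, true_and]
      constructor
      · rintro ⟨h1, h2⟩
        rw [numDescents_ins, if_neg (by have hv : (jf:ℕ) = j - 1 := rfl; omega)] at h1
        exact ⟨by omega, by omega⟩
      · rintro ⟨h1, h2⟩
        refine ⟨?_, by omega⟩
        rw [numDescents_ins, if_neg (by have hv : (jf:ℕ) = j - 1 := rfl; omega)]
        omega
    rw [hset]
    rw [Finset.card_eq_sum_card_fiberwise
      (f := fun τ : Equiv.Perm (Fin (m+1)) => (τ (Fin.last m) : ℕ) + 1)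
      (t := Finset.Icc 1 (j-1))
      (by intro τ hτ; simp only [Finset.mem_coe, Finset.mem_filter] at hτ; rw [Finset.mem_coe, Finset.mem_Icc]
          show 1 ≤ (τ (Fin.last m) : ℕ) + 1 ∧ (τ (Fin.last m) : ℕ) + 1 ≤ j - 1; omega)]
    apply Finset.sum_congr rfl
    intro j' hj'
    rw [Finset.mem_Icc] at hj'
    rw [A_def']
    congr 1
    rw [Finset.filter_filter]
    apply Finset.filter_congr
    intro τ _
    try simp only [Finset.mem_univ, true_and]
    constructor
    · rintro ⟨⟨h1, _⟩, h3⟩; exact ⟨h1, h3⟩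
    · rintro ⟨h1, h2⟩; exact ⟨⟨h1, by omega⟩, h2⟩
  · -- (j ≤ τlast+1) part : descents drop by one
    by_cases hk : 1 ≤ k
    · rw [if_pos hk]
      have hset : (Finset.univ.filter fun τ : Equiv.Perm (Fin (m+1)) =>
            numDescents (ins jf τ) = k).filter
            (fun τ => j ≤ (τ (Fin.last m) : ℕ) + 1)
          = Finset.univ.filter (fun τ : Equiv.Perm (Fin (m+1)) =>
            numDescents τ = k - 1 ∧ j ≤ (τ (Fin.last m) : ℕ) + 1) := by
        rw [Finset.filter_filter]
        apply Finset.filter_congr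
        intro τ _
        try simp only [Finset.mem_univ, true_and]
        constructor
        · rintro ⟨h1, h2⟩
          rw [numDescents_ins, if_pos (by have hv : (jf:ℕ) = j - 1 := rfl; omega)] at h1
          exact ⟨by omega, h2⟩
        · rintro ⟨h1, h2⟩
          refine ⟨?_, h2⟩
          rw [numDescents_ins, if_pos (by have hv : (jf:ℕ) = j - 1 := rfl; omega)]
          omega
      rw [hset]
      rw [Finset.card_eq_sum_card_fiberwise
        (f := fun τ : Equiv.Perm (Fin (m+1)) => (τ (Fin.last m) : ℕ) + 1)
        (t := Finset.Icc j (m+1))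
        (by intro τ hτ; simp only [Finset.mem_coe, Finset.mem_filter] at hτ; rw [Finset.mem_coe, Finset.mem_Icc]
            show j ≤ (τ (Fin.last m) : ℕ) + 1 ∧ (τ (Fin.last m) : ℕ) + 1 ≤ m + 1
            have := (τ (Fin.last m)).isLt; omega)]
      apply Finset.sum_congr rfl
      intro j' hj'
      rw [Finset.mem_Icc] at hj'
      rw [A_def']
      congr 1
      rw [Finset.filter_filter]
      apply Finset.filter_congr
      intro τ _
      try simp only [Finset.mem_univ, true_and]
      constructor
      · rintro ⟨⟨h1, _⟩, h3⟩; exact ⟨h1, h3⟩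
      · rintro ⟨h1, h2⟩; exact ⟨⟨h1, by omega⟩, h2⟩
    · rw [if_neg hk]
      rw [Finset.card_eq_zero, Finset.filter_filter, Finset.filter_eq_empty_iff]
      intro τ _
      rintro ⟨h1, h2⟩
      rw [numDescents_ins, if_pos (by have hv : (jf:ℕ) = j - 1 := rfl; omega)] at h1
      omega

def G (N k m : ℕ) : ℤ :=
  ∑ i ∈ Finset.range (k+1),
    ((N+1).choose i : ℤ) * (-1)^i * ((k:ℤ) - i)^(N-m) * ((k:ℤ) - i + 1)^m

lemma tel1 (a : ℤ) (m N : ℕ) (h : m ≤ N + 1) :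
    ∑ t ∈ Finset.range m, a^(N-t) * (a+1)^t = a^(N+1-m) * (a+1)^m - a^(N+1) := by
  induction m with
  | zero => simp
  | succ m ih =>
    rw [Finset.sum_range_succ, ih (by omega)]
    have h1 : N + 1 - m = (N - m) + 1 := by omega
    have h2 : N + 1 - (m+1) = N - m := by omega
    rw [h1, h2]
    ring

lemma tel2 (b : ℤ) (m N : ℕ) (h : m ≤ N + 1) :
    ∑ t ∈ Finset.Ico m (N+1), b^(N-t) * (b+1)^t
      = (b+1)^(N+1) - b^(N+1-m) * (b+1)^m := by
  rw [Finset.sum_Ico_eq_sub _ h, tel1 b (N+1) N le_rfl, tel1 b m N h]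
  simp

lemma G_step0 (n m : ℕ) (hm : m ≤ n + 1) :
    ∑ m' ∈ Finset.range m, G n 0 m' = G (n+1) 0 m := by
  have hG : ∀ N m : ℕ, G N 0 m = (0:ℤ)^(N-m) := by
    intro N m
    simp [G]
  rw [hG]
  rw [Finset.sum_congr rfl (fun m' _ => hG n m')]
  have : ∀ m' ∈ Finset.range m, (0:ℤ)^(n-m') = if m' = n then 1 else 0 := by
    intro m' hm'
    rw [zero_pow_eq]
    rw [Finset.mem_range] at hm'
    by_cases h : m' = n
    · simp [h]
    · rw [if_neg (by omega), if_neg h]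
  rw [Finset.sum_congr rfl this, Finset.sum_ite_eq' (Finset.range m) n (fun _ => (1:ℤ))]
  rw [zero_pow_eq]
  simp only [Finset.mem_range]
  by_cases h : m = n + 1
  · rw [if_pos (by omega), if_pos (by omega)]
  · rw [if_neg (by omega), if_neg (by omega)]

lemma G_step (n K m : ℕ) (hm : m ≤ n + 1) :
    (∑ m' ∈ Finset.range m, G n (K+1) m')
      + ∑ m' ∈ Finset.Ico m (n+1), G n K m' = G (n+1) (K+1) m := by
  unfold G
  rw [Finset.sum_comm (s := Finset.range m) (t := Finset.range (K+1+1))]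
  rw [Finset.sum_comm (s := Finset.Ico m (n+1)) (t := Finset.range (K+1))]
  have e1 : ∀ i ∈ Finset.range (K+1+1),
      (∑ m' ∈ Finset.range m,
        ((n+1).choose i : ℤ) * (-1)^i * (((K+1:ℕ):ℤ) - i)^(n-m') * (((K+1:ℕ):ℤ) - i + 1)^m')
      = ((n+1).choose i : ℤ) * (-1)^i *
          ((((K+1:ℕ):ℤ) - i)^(n+1-m) * (((K+1:ℕ):ℤ) - i + 1)^m - (((K+1:ℕ):ℤ) - i)^(n+1)) := by
    intro i _
    rw [show (((n+1).choose i : ℤ) * (-1)^i *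
          ((((K+1:ℕ):ℤ) - i)^(n+1-m) * (((K+1:ℕ):ℤ) - i + 1)^m - (((K+1:ℕ):ℤ) - i)^(n+1)))
        = ((n+1).choose i : ℤ) * (-1)^i *
          (∑ m' ∈ Finset.range m, (((K+1:ℕ):ℤ) - i)^(n-m') * (((K+1:ℕ):ℤ) - i + 1)^m')
        from by rw [tel1 _ m n hm]]
    rw [Finset.mul_sum]
    apply Finset.sum_congr rfl
    intros; ring
  have e2 : ∀ i ∈ Finset.range (K+1),
      (∑ m' ∈ Finset.Ico m (n+1),
        ((n+1).choose i : ℤ) * (-1)^i * (((K:ℕ):ℤ) - i)^(n-m') * (((K:ℕ):ℤ) - i + 1)^m')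
      = ((n+1).choose i : ℤ) * (-1)^i *
          ((((K:ℕ):ℤ) - i + 1)^(n+1) - (((K:ℕ):ℤ) - i)^(n+1-m) * (((K:ℕ):ℤ) - i + 1)^m) := by
    intro i _
    rw [show (((n+1).choose i : ℤ) * (-1)^i *
          ((((K:ℕ):ℤ) - i + 1)^(n+1) - (((K:ℕ):ℤ) - i)^(n+1-m) * (((K:ℕ):ℤ) - i + 1)^m))
        = ((n+1).choose i : ℤ) * (-1)^i *
          (∑ m' ∈ Finset.Ico m (n+1), (((K:ℕ):ℤ) - i)^(n-m') * (((K:ℕ):ℤ) - i + 1)^m')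
        from by rw [tel2 _ m n hm]]
    rw [Finset.mul_sum]
    apply Finset.sum_congr rfl
    intros; ring
  rw [Finset.sum_congr rfl e1, Finset.sum_congr rfl e2]
  -- expand products over subtraction
  rw [Finset.sum_congr rfl (fun i _ => mul_sub (((n+1).choose i : ℤ) * (-1)^i) _ _),
    Finset.sum_sub_distrib]
  rw [Finset.sum_congr rfl (fun i _ => mul_sub (((n+1).choose i : ℤ) * (-1)^i) _ _),
    Finset.sum_sub_distrib]
  -- the a^{n+1} sums cancel up to the vanishing top term
  have hcancel : ∑ i ∈ Finset.range (K+1+1),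
      ((n+1).choose i : ℤ) * (-1)^i * (((K+1:ℕ):ℤ) - i)^(n+1)
      = ∑ i ∈ Finset.range (K+1),
      ((n+1).choose i : ℤ) * (-1)^i * (((K:ℕ):ℤ) - i + 1)^(n+1) := by
    rw [Finset.sum_range_succ]
    have : (((K+1:ℕ):ℤ) - ((K+1:ℕ):ℤ))^(n+1) = 0 := by
      rw [sub_self, zero_pow (by omega)]
    rw [show ((((K+1:ℕ):ℤ)) - ((K+1 : ℕ):ℤ))^(n+1) = 0 from this]
    rw [mul_zero, add_zero]
    apply Finset.sum_congr rfl
    intros; push_cast; ring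
  rw [hcancel, sub_add_sub_cancel]
  rw [Finset.sum_range_succ']
  conv_rhs => rw [Finset.sum_range_succ']
  rw [add_sub_right_comm, ← Finset.sum_sub_distrib]
  congr 1
  · apply Finset.sum_congr rfl
    intro i _
    rw [show (n+1+1).choose (i+1) = (n+1).choose i + (n+1).choose (i+1) from
      Nat.choose_succ_succ _ _]
    push_cast
    ring
  · norm_num

lemma G_zero_base (k : ℕ) : G 0 k 0 = if k = 0 then 1 else 0 := by
  have hG : G 0 k 0 = ∑ i ∈ Finset.range (k+1), ((1).choose i : ℤ) * (-1)^i := by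
    unfold G
    apply Finset.sum_congr rfl
    intros; simp
  rw [hG]
  cases k with
  | zero => simp
  | succ K =>
    rw [if_neg (by omega)]
    have hsub : Finset.range 2 ⊆ Finset.range (K+1+1) := by
      intro x hx; rw [Finset.mem_range] at *; omega
    rw [← Finset.sum_subset hsub (fun x _ hx => by
      rw [Finset.mem_range] at hx
      rw [Nat.choose_eq_zero_of_lt (by omega)]
      simp)]
    decide

lemma A_eq_G : ∀ d, 1 ≤ d → ∀ k j, 1 ≤ j → j ≤ d → (A d k j : ℤ) = G (d-1) k (j-1) := by
  intro d
  induction d with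
  | zero => omega
  | succ n ih =>
    intro _ k j hj1 hj2
    match n, ih with
    | 0, _ =>
      have hj : j = 1 := by omega
      subst hj
      rw [A_one]
      simp only [and_true]
      rw [G_zero_base]
      split <;> simp
    | (m+1), ih =>
      rw [A_rec m k j hj1 hj2]
      push_cast
      have h1 : (∑ j' ∈ Finset.Icc 1 (j-1), (A (m+1) k j' : ℤ))
          = ∑ m' ∈ Finset.range (j-1), G m k m' := by
        rw [show Finset.Icc 1 (j-1) = Finset.Ico 1 j from by
          rw [← Finset.Ico_add_one_right_eq_Icc]; congr 1; omega]
        rw [Finset.sum_Ico_eq_sum_range]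
        apply Finset.sum_congr rfl
        intro i hi
        rw [Finset.mem_range] at hi
        rw [ih (by omega) k (1+i) (by omega) (by omega)]
        congr 1
        omega
      rw [h1]
      cases k with
      | zero =>
        rw [if_neg (by omega)]
        push_cast
        rw [add_zero]
        exact G_step0 m (j-1) (by omega)
      | succ K =>
        rw [if_pos (by omega)]
        have h2 : (∑ j' ∈ Finset.Icc j (m+1), (A (m+1) (K+1-1) j' : ℤ))
            = ∑ m' ∈ Finset.Ico (j-1) (m+1), G m K m' := by
          rw [show Finset.Icc j (m+1) = Finset.Ico j (m+2) from (Finset.Ico_add_one_right_eq_Icc _ _).symm]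
          rw [Finset.sum_Ico_eq_sum_range, Finset.sum_Ico_eq_sum_range]
          rw [show m + 1 - (j-1) = m + 2 - j from by omega]
          apply Finset.sum_congr rfl
          intro i hi
          rw [Finset.mem_range] at hi
          rw [ih (by omega) (K+1-1) (j+i) (by omega) (by omega)]
          congr 1 <;> omega
        rw [h2]
        exact G_step m K (j-1) (by omega)

end RefinedAux

theorem refined_eulerian_explicit (d k j : ℕ) (hd : 1 ≤ d) (hj1 : 1 ≤ j) (hjd : j ≤ d)
    (hk1 : 1 ≤ k) (hkd : k ≤ d - 1) :
    (refinedEulerian d (k : ℤ) j : ℤ) =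
      ∑ i ∈ Finset.range (k + 1),
        (d.choose i : ℤ) * (-1 : ℤ) ^ i * ((k : ℤ) - (i : ℤ)) ^ (d - j) *
          ((k : ℤ) - (i : ℤ) + 1) ^ (j - 1) := by

  rw [RefinedAux.refinedEulerian_eq_A, RefinedAux.A_eq_G d hd k j hj1 hjd]
  unfold RefinedAux.G
  rw [show d - 1 + 1 = d from by omega, show d - 1 - (j - 1) = d - j from by omega]
end
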